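/- arXiv:1001.3729 — 10 statements merged into one kernel-verified Lean document; each statement's English description precedes it below -/
import Mathlib

section
/- Let K be a convex body in ℝ^d, Λ a lattice in ℝ^d, and Λ̃ a full-rank sublattice of Λ. Then the number of lattice points of Λ in K satisfies G(K,Λ) ≤ (det(Λ̃)/det(Λ)) · G(K−K, Λ̃), where G(A,L) = #(A ∩ L). -/
open Pointwise Set

noncomputable def succMin {d : ℕ} (i : ℕ) (C : Set (Fin d → ℝ)) (Λ : Submodule ℤ (Fin d → ℝ)) : ℝ :=
  sInf {t : ℝ | 0 < t ∧ i ≤ Module.finrank ℝ (Submodule.span ℝ ((t • C) ∩ (Λ : Set (Fin d → ℝ))))}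

noncomputable def lam {d : ℕ} (i : ℕ) (K : Set (Fin d → ℝ)) (Λ : Submodule ℤ (Fin d → ℝ)) : ℝ :=
  succMin i ((2:ℝ)⁻¹ • (K - K)) Λ

noncomputable def latCount {d : ℕ} (K : Set (Fin d → ℝ)) (Λ : Submodule ℤ (Fin d → ℝ)) : ℕ :=
  (K ∩ (Λ : Set (Fin d → ℝ))).ncard

open MeasureTheory
theorem stmt1 {d : ℕ} (K : Set (Fin d → ℝ)) (Λ Λ' : Submodule ℤ (Fin d → ℝ))
    [DiscreteTopology Λ] [IsZLattice ℝ Λ] [DiscreteTopology Λ'] [IsZLattice ℝ Λ']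
    (hKconv : Convex ℝ K) (hKcomp : IsCompact K) (hKint : (interior K).Nonempty)
    (hsub : Λ' ≤ Λ) :
    (latCount K Λ : ℝ) ≤ (ZLattice.covolume Λ' / ZLattice.covolume Λ) *
      (latCount (K - K) Λ' : ℝ) := by
  classical
  set S : Set (Fin d → ℝ) := K ∩ (Λ : Set (Fin d → ℝ)) with hSdef
  set T : Set (Fin d → ℝ) := (K - K) ∩ (Λ' : Set (Fin d → ℝ)) with hTdef
  -- Finiteness of S and T
  haveI : DiscreteTopology (↥(Λ : Set (Fin d → ℝ))) := inferInstanceAs (DiscreteTopology Λ)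
  haveI : DiscreteTopology (↥(Λ' : Set (Fin d → ℝ))) := inferInstanceAs (DiscreteTopology Λ')
  haveI : DiscreteTopology Λ.toAddSubgroup := inferInstanceAs (DiscreteTopology Λ)
  haveI : DiscreteTopology Λ'.toAddSubgroup := inferInstanceAs (DiscreteTopology Λ')
  have hΛcl : IsClosed (Λ : Set (Fin d → ℝ)) :=
    AddSubgroup.isClosed_of_discrete (H := Λ.toAddSubgroup)
  have hΛ'cl : IsClosed (Λ' : Set (Fin d → ℝ)) :=
    AddSubgroup.isClosed_of_discrete (H := Λ'.toAddSubgroup)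
  have hSfin : S.Finite := Metric.finite_isBounded_inter_isClosed ⟨inferInstance⟩ hKcomp.isBounded hΛcl
  have hKKb : Bornology.IsBounded (K - K) := by
    have hc : IsCompact ((fun p : (Fin d → ℝ) × (Fin d → ℝ) => p.1 - p.2) '' (K ×ˢ K)) :=
      (hKcomp.prod hKcomp).image (by fun_prop)
    refine hc.isBounded.subset ?_
    rintro x ⟨a, ha, b, hb, rfl⟩
    exact ⟨(a, b), ⟨ha, hb⟩, rfl⟩
  have hTfin : T.Finite := Metric.finite_isBounded_inter_isClosed ⟨inferInstance⟩ hKKb hΛ'cl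
  -- representative function
  set r : (Fin d → ℝ) → (Fin d → ℝ) :=
    fun s => if h : (S ∩ {y | y - s ∈ Λ'}).Nonempty then h.some else 0 with hrdef
  have hr_mem : ∀ s ∈ S, r s ∈ S ∧ r s - s ∈ Λ' := by
    intro s hs
    have hne : (S ∩ {y | y - s ∈ Λ'}).Nonempty := ⟨s, hs, by simp⟩
    have hmem := hne.some_mem
    rw [hrdef]
    simp only [dif_pos hne]
    exact ⟨hmem.1, hmem.2⟩
  have hr_const : ∀ s s' : Fin d → ℝ, s - s' ∈ Λ' → r s = r s' := by
    intro s s' h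
    have hset : {y : Fin d → ℝ | y - s ∈ Λ'} = {y | y - s' ∈ Λ'} := by
      ext y
      constructor
      · intro hy
        have h2 : (y - s) + (s - s') ∈ Λ' := Λ'.add_mem hy h
        simpa [sub_add_sub_cancel] using h2
      · intro hy
        have h2 : (y - s') - (s - s') ∈ Λ' := Λ'.sub_mem hy h
        simpa [sub_sub_sub_cancel_right] using h2
    rw [hrdef]
    simp only [hset]
  set R : Set (Fin d → ℝ) := r '' S with hRdef
  have hRfin : R.Finite := hSfin.image r
  have hRS : R ⊆ S := by
    rintro _ ⟨s, hs, rfl⟩; exact (hr_mem s hs).1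
  have hsep : ∀ x ∈ R, ∀ y ∈ R, x - y ∈ Λ' → x = y := by
    rintro _ ⟨s, hs, rfl⟩ _ ⟨s', hs', rfl⟩ hxy
    have h1 := (hr_mem s hs).2
    have h2 := (hr_mem s' hs').2
    have ha : s - r s' ∈ Λ' := by
      have h3 : (r s - r s') - (r s - s) = s - r s' := by abel
      exact h3 ▸ Λ'.sub_mem hxy h1
    have hss' : s - s' ∈ Λ' := by
      have h4 : (s - r s') + (r s' - s') = s - s' := by abel
      exact h4 ▸ Λ'.add_mem ha h2
    exact hr_const s s' hss'
  -- Step A : S.ncard ≤ R.ncard * T.ncard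
  have hA : S.ncard ≤ R.ncard * T.ncard := by
    have hmaps : ∀ s ∈ S, (r s, s - r s) ∈ R ×ˢ T := by
      intro s hs
      refine ⟨⟨s, hs, rfl⟩, ?_, ?_⟩
      · exact Set.sub_mem_sub hs.1 (hr_mem s hs).1.1
      · have h2 := Λ'.neg_mem (hr_mem s hs).2
        simpa [neg_sub] using h2
    have hinj : Set.InjOn (fun s => (r s, s - r s)) S := by
      intro a ha b hb hab
      have h1 : r a = r b := congrArg Prod.fst hab
      have h2 : a - r a = b - r b := congrArg Prod.snd hab
      rw [h1] at h2
      exact sub_left_injective h2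
    have hle := Set.ncard_le_ncard_of_injOn _ hmaps hinj (hRfin.prod hTfin)
    have hcard : (R ×ˢ T).ncard = R.ncard * T.ncard := by
      rw [← Nat.card_coe_set_eq, ← Nat.card_coe_set_eq, ← Nat.card_coe_set_eq,
        Nat.card_congr (Equiv.Set.prod _ _), Nat.card_prod]
    omega
  -- Step B : R.ncard * covol Λ ≤ covol Λ'
  set F : Set (Fin d → ℝ) :=
    ZSpan.fundamentalDomain ((Module.Free.chooseBasis ℤ Λ).ofZLatticeBasis ℝ) with hFdef
  set F' : Set (Fin d → ℝ) :=
    ZSpan.fundamentalDomain ((Module.Free.chooseBasis ℤ Λ').ofZLatticeBasis ℝ) with hF'def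
  have hF : IsAddFundamentalDomain Λ F := ZLattice.isAddFundamentalDomain _ volume
  have hF' : IsAddFundamentalDomain Λ' F' := ZLattice.isAddFundamentalDomain _ volume
  have hFm : MeasurableSet F := ZSpan.fundamentalDomain_measurableSet _
  have hcov : ZLattice.covolume Λ = (volume F).toReal :=
    ZLattice.covolume_eq_measure_fundamentalDomain Λ volume hF
  have hcov' : ZLattice.covolume Λ' = (volume F').toReal :=
    ZLattice.covolume_eq_measure_fundamentalDomain Λ' volume hF'
  have hF'lt : volume F' < ⊤ :=
    Bornology.IsBounded.measure_lt_top (ZSpan.fundamentalDomain_isBounded _)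
  -- pairwise a.e.-disjointness of Λ-translates of F
  have hd1 : ∀ x ∈ Λ, ∀ y ∈ Λ, x ≠ y → AEDisjoint volume (x +ᵥ F) (y +ᵥ F) := by
    intro x hx y hy hxy
    have hp := hF.pairwise_aedisjoint_of_ac (Measure.AbsolutelyContinuous.refl volume)
    have hne : (⟨x, hx⟩ : Λ) ≠ ⟨y, hy⟩ := fun h => hxy (congrArg Subtype.val h)
    exact hp hne
  haveI : Fintype ↥R := hRfin.fintype
  set t : Set (Fin d → ℝ) := ⋃ x : R, ((x : Fin d → ℝ) +ᵥ F) with htdef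
  have htvol : volume t = (R.ncard : ENNReal) * volume F := by
    rw [htdef, measure_iUnion₀]
    · simp only [measure_vadd]
      rw [tsum_fintype]
      rw [Finset.sum_const, Finset.card_univ, nsmul_eq_mul, ← Nat.card_eq_fintype_card,
        Nat.card_coe_set_eq]
    · intro x y hxy
      exact hd1 x (hRS x.2).2 y (hRS y.2).2 (fun h => hxy (Subtype.ext h))
    · intro x
      exact (hFm.const_vadd ((x : Fin d → ℝ))).nullMeasurableSet
  haveI : MeasurableVAdd ↥Λ' (Fin d → ℝ) := by
    refine { measurable_const_vadd := fun c => ?_, measurable_vadd_const := fun x => ?_ }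
    · exact measurable_const_add (c : Fin d → ℝ)
    · exact measurable_subtype_coe.add_const x
  haveI : VAddInvariantMeasure ↥Λ' (Fin d → ℝ) volume :=
    ⟨fun γ s _ => measure_preimage_vadd volume (γ : Fin d → ℝ) s⟩
  have hpack : volume t ≤ volume F' := by
    refine hF'.measure_le_of_pairwise_disjoint ?_ ?_
    · exact (MeasurableSet.iUnion fun x : R => hFm.const_vadd ((x : Fin d → ℝ))).nullMeasurableSet
    · intro γ₁ γ₂ hne
      have key : AEDisjoint volume ((γ₁ : Fin d → ℝ) +ᵥ t) ((γ₂ : Fin d → ℝ) +ᵥ t) := by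
        rw [htdef, vadd_set_iUnion, vadd_set_iUnion]
        rw [AEDisjoint.iUnion_left_iff]
        intro x
        rw [AEDisjoint.iUnion_right_iff]
        intro y
        rw [vadd_vadd, vadd_vadd]
        refine hd1 _ (Λ.add_mem (hsub γ₁.2) (hRS x.2).2) _
          (Λ.add_mem (hsub γ₂.2) (hRS y.2).2) ?_
        intro heq
        have hxy : (x : Fin d → ℝ) - y ∈ Λ' := by
          have hxe : (x : Fin d → ℝ) - y = (γ₂ : Fin d → ℝ) - γ₁ := by
            rw [sub_eq_sub_iff_add_eq_add, add_comm]
            exact heq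
          rw [hxe]
          exact Λ'.sub_mem γ₂.2 γ₁.2
        have hxey : (x : Fin d → ℝ) = y := hsep _ x.2 _ y.2 hxy
        apply hne
        rw [hxey] at heq
        exact Subtype.ext (add_right_cancel heq)
      exact key.mono Set.inter_subset_left Set.inter_subset_left
  have hB : (R.ncard : ℝ) * ZLattice.covolume Λ ≤ ZLattice.covolume Λ' := by
    rw [hcov, hcov']
    have h1 : ((R.ncard : ENNReal) * volume F).toReal ≤ (volume F').toReal :=
      ENNReal.toReal_mono hF'lt.ne (htvol ▸ hpack)
    simpa [ENNReal.toReal_mul] using h1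
  -- conclusion
  have hcovpos : 0 < ZLattice.covolume Λ := ZLattice.covolume_pos Λ volume
  have hRle : (R.ncard : ℝ) ≤ ZLattice.covolume Λ' / ZLattice.covolume Λ := by
    rw [le_div_iff₀ hcovpos]
    exact hB
  have hfinal : (S.ncard : ℝ) ≤
      (ZLattice.covolume Λ' / ZLattice.covolume Λ) * (T.ncard : ℝ) := by
    refine le_trans (b := (R.ncard : ℝ) * (T.ncard : ℝ)) (by exact_mod_cast hA) ?_
    exact mul_le_mul_of_nonneg_right hRle (by positivity)
  simpa only [latCount, ← hSdef, ← hTdef] using hfinal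
end

section
/- Let K ⊂ ℝ^d be a convex body and Λ a lattice in ℝ^d such that K ∩ Λ = ∅. Then for every real t > 1 there exists a lattice vector v ∈ Λ such that K ∩ (v + tΛ) = ∅. -/
open Pointwise Set

theorem stmt2 {d : ℕ} (K : Set (Fin d → ℝ)) (Λ : Submodule ℤ (Fin d → ℝ))
    [DiscreteTopology Λ] [IsZLattice ℝ Λ]
    (hKconv : Convex ℝ K) (hKcomp : IsCompact K) (hKint : (interior K).Nonempty)
    (hdisj : K ∩ (Λ : Set (Fin d → ℝ)) = ∅) (t : ℝ) (ht : 1 < t) :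
    ∃ v ∈ Λ, K ∩ (v +ᵥ (t • (Λ : Set (Fin d → ℝ)))) = ∅ := by
  have hΛclosed : IsClosed (Λ : Set (Fin d → ℝ)) := by
    have : DiscreteTopology Λ.toAddSubgroup := ‹_›
    exact AddSubgroup.isClosed_of_discrete (H := Λ.toAddSubgroup)
  have hΛne : (Λ : Set (Fin d → ℝ)).Nonempty := ⟨0, Λ.zero_mem⟩
  have hKne : K.Nonempty := hKint.mono interior_subset
  obtain ⟨p, hpK, hpmin⟩ := hKcomp.exists_isMinOn hKne
    (Metric.continuous_infDist_pt (Λ : Set (Fin d → ℝ))).continuousOn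
  set δ := Metric.infDist p (Λ : Set (Fin d → ℝ)) with hδ
  have hδpos : 0 < δ := by
    rw [hδ, ← hΛclosed.notMem_iff_infDist_pos hΛne]
    intro hp
    exact absurd hdisj (Nonempty.ne_empty ⟨p, hpK, hp⟩)
  have hlow : ∀ x ∈ K, ∀ w ∈ Λ, δ ≤ dist x w := by
    intro x hx w hw
    exact le_trans (hpmin hx) (Metric.infDist_le_dist_of_mem hw)
  set s : ℝ := t⁻¹ with hs
  have ht0 : (0:ℝ) < t := lt_trans one_pos ht
  have hs0 : 0 < s := inv_pos.2 ht0
  have hs1 : s < 1 := inv_lt_one_of_one_lt₀ ht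
  have h1s : 0 < 1 - s := by linarith
  have hδlt : δ < δ / (1 - s) := by
    rw [lt_div_iff₀ h1s]; nlinarith
  obtain ⟨q, hqΛ, hpq⟩ := (Metric.infDist_lt_iff hΛne).1 (lt_of_eq_of_lt hδ.symm hδlt)
  refine ⟨q, hqΛ, ?_⟩
  rw [eq_empty_iff_forall_notMem]
  rintro x ⟨hxK, hx2⟩
  obtain ⟨y, hy, rfl⟩ := hx2
  obtain ⟨u, huΛ, rfl⟩ := hy
  -- x = q +ᵥ t • u
  set x : Fin d → ℝ := q + t • u with hx
  have hxK' : x ∈ K := hxK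
  set z : Fin d → ℝ := s • x + (1 - s) • p with hz
  have hzK : z ∈ K := hKconv hxK' hpK hs0.le h1s.le (by ring)
  have hwΛ : u + q ∈ Λ := Λ.add_mem huΛ hqΛ
  have hzw : z - (u + q) = (1 - s) • (p - q) := by
    rw [hz, hx]
    have hst : s * t = 1 := inv_mul_cancel₀ (ne_of_gt ht0)
    rw [smul_add, smul_smul, hst]
    module
  have : dist z (u + q) < δ := by
    rw [dist_eq_norm, hzw, norm_smul, Real.norm_eq_abs, abs_of_pos h1s]
    calc (1 - s) * ‖p - q‖ = (1 - s) * dist p q := by rw [dist_eq_norm]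
    _ < (1 - s) * (δ / (1 - s)) := by exact mul_lt_mul_of_pos_left hpq h1s
    _ = δ := by field_simp
  exact absurd (hlow z hzK (u + q) hwΛ) (not_le.2 this)
end

section
/- Let K be a convex body in ℝ^d, Λ a lattice, and q_i = ⌊2/λ_i(K,Λ) + 1⌋ where λ_i are the successive minima of (1/2)(K−K). Let n_1,…,n_d be integers such that n_{i+1} divides n_i for 1 ≤ i ≤ d−1 and q_i ≤ n_i for all i. Then G(K,Λ) ≤ n_1·n_2⋯n_d. -/
open Pointwise Set Module


lemma adapted_basis (R : Type) [CommRing R] [IsDomain R] [IsPrincipalIdealRing R] :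
    ∀ (d : ℕ) (M : Type) [AddCommGroup M] [Module R M]
    [Module.Free R M] [Module.Finite R M], finrank R M = d →
    ∀ (W : ℕ → Submodule R M),
    (∀ i j, i ≤ j → W i ≤ W j) →
    (∀ j (k : R) (x : M), k ≠ 0 → k • x ∈ W j → x ∈ W j) →
    (∀ j, finrank R (W j) ≤ j) →
    ∃ b : Basis (Fin d) R M, ∀ (j : ℕ) (x : M), x ∈ W j → ∀ i : Fin d, j ≤ i.val →
      b.repr x i = 0 := by
  intro d
  induction d using Nat.strong_induction_on with
  | _ d IH =>
  intro M _ _ _ _ hrank W hmono hsat hrk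
  rcases Nat.eq_zero_or_pos d with hd | hd
  · subst hd
    refine ⟨(Module.Free.chooseBasis R M).reindex
      (Fintype.equivFinOfCardEq (by rw [← finrank_eq_card_chooseBasisIndex, hrank])), ?_⟩
    intro j x hx i
    exact absurd i.2 (by omega)
  -- main step
  haveI : IsNoetherian R M := isNoetherian_of_isNoetherianRing_of_finite R M
  set N : Submodule R M := W (d-1) with hNdef
  haveI : Module.Finite R N := Module.Finite.iff_fg.mpr (IsNoetherian.noetherian N)
  haveI : Module.Free R N := by infer_instance
  haveI : NoZeroSMulDivisors R (M ⧸ N) := by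
    constructor
    rintro k x h
    by_cases hk : k = 0
    · exact Or.inl hk
    · right
      obtain ⟨y, rfl⟩ := N.mkQ_surjective x
      have h2 : k • y ∈ N := by
        rwa [← map_smul, Submodule.mkQ_apply, Submodule.Quotient.mk_eq_zero] at h
      exact (Submodule.Quotient.mk_eq_zero N).2 (hsat _ k y hk h2)
  haveI : Module.Finite R (M ⧸ N) := by infer_instance
  haveI : Module.Free R (M ⧸ N) := by infer_instance
  set bQ := Module.Free.chooseBasis R (M ⧸ N) with hbQ
  set sec : (M ⧸ N) →ₗ[R] M := bQ.constr R (fun i => (N.mkQ_surjective (bQ i)).choose)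
    with hsecdef
  have hsecQ : N.mkQ.comp sec = LinearMap.id := by
    apply bQ.ext
    intro i
    simp only [hsecdef, LinearMap.comp_apply, Basis.constr_basis, LinearMap.id_apply]
    exact (N.mkQ_surjective (bQ i)).choose_spec
  have hsecQ' : ∀ q, N.mkQ (sec q) = q := fun q => LinearMap.congr_fun hsecQ q
  have hinj : Function.Injective sec := by
    intro a b h
    rw [← hsecQ' a, ← hsecQ' b, h]
  set S := LinearMap.range sec with hSdef
  have hcompl : IsCompl N S := by
    constructor
    · rw [Submodule.disjoint_def]
      rintro x hxN ⟨q, rfl⟩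
      have hq : q = 0 := by
        have h1 := hsecQ' q
        have h2 : N.mkQ (sec q) = 0 := by
          rw [Submodule.mkQ_apply, Submodule.Quotient.mk_eq_zero]; exact hxN
        rw [h2] at h1; exact h1.symm
      rw [hq, map_zero]
    · rw [codisjoint_iff, eq_top_iff]
      intro x _
      have h1 : x - sec (N.mkQ x) ∈ N := by
        rw [← Submodule.Quotient.mk_eq_zero, Submodule.Quotient.mk_sub]
        rw [← Submodule.mkQ_apply, ← Submodule.mkQ_apply, hsecQ', sub_self]
      exact Submodule.mem_sup.2 ⟨x - sec (N.mkQ x), h1, sec (N.mkQ x), ⟨_, rfl⟩, by abel⟩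
  set e := Submodule.prodEquivOfIsCompl N S hcompl with hedef
  set eS : (M ⧸ N) ≃ₗ[R] S := LinearEquiv.ofInjective sec hinj with heSdef
  set bS : Basis _ R S := bQ.map eS with hbSdef
  -- recursion
  set r := finrank R N with hrdef
  have hrle : r ≤ d - 1 := hrk (d-1)
  have hrlt : r < d := by omega
  obtain ⟨c, hc⟩ := IH r hrlt N rfl (fun j => Submodule.comap N.subtype (W j))
    (fun i j hij => Submodule.comap_mono (hmono i j hij))
    (by
      intro j k x hk hkx
      simp only [Submodule.mem_comap] at hkx ⊢
      rw [map_smul] at hkx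
      exact hsat j k _ hk hkx)
    (by
      intro j
      rcases le_or_gt j (d-1) with hj | hj
      · calc finrank R (Submodule.comap N.subtype (W j))
            = finrank R (W j) := LinearEquiv.finrank_eq (Submodule.comapSubtypeEquivOfLe (hmono j (d-1) hj))
          _ ≤ j := hrk j
      · exact le_trans (Submodule.finrank_le _) (by omega))
  -- index bookkeeping
  have hcards : r + Fintype.card (Module.Free.ChooseBasisIndex R (M ⧸ N)) = d := by
    have := finrank_eq_card_basis ((c.prod bS).map e)
    rw [hrank] at this
    simp [Fintype.card_sum] at this
    omega
  set σ : (Fin r ⊕ Module.Free.ChooseBasisIndex R (M ⧸ N)) ≃ Fin d :=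
    ((Equiv.refl (Fin r)).sumCongr (Fintype.equivFinOfCardEq rfl)).trans
      ((finSumFinEquiv).trans (finCongr hcards)) with hσdef
  refine ⟨((c.prod bS).map e).reindex σ, ?_⟩
  intro j x hx i hji
  have hjd : j ≤ d - 1 := by have := i.2; omega
  have hxN : x ∈ N := hmono j (d-1) hjd hx
  have hex : e (⟨x, hxN⟩, 0) = x := by
    rw [hedef]
    simp [Submodule.coe_prodEquivOfIsCompl']
  rw [Basis.repr_reindex_apply, Basis.map_repr]
  have hesymm : e.symm x = (⟨x, hxN⟩, 0) := by
    rw [LinearEquiv.symm_apply_eq, hex]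
  rw [LinearEquiv.trans_apply, hesymm]
  rcases hσ : σ.symm i with k | k
  · have hσk : σ (Sum.inl k) = i := by rw [← hσ, Equiv.apply_symm_apply]
    have hik : (i : ℕ) = (k : ℕ) := by
      rw [← hσk]; simp [hσdef]
    rw [Basis.prod_repr_inl]
    exact hc j ⟨x, hxN⟩ (by simpa [Submodule.mem_comap] using hx) k (by omega)
  · rw [Basis.prod_repr_inr]
    simp


set_option maxHeartbeats 2000000 in
theorem stmt4 {d : ℕ} (K : Set (Fin d → ℝ)) (Λ : Submodule ℤ (Fin d → ℝ))
    [DiscreteTopology Λ] [IsZLattice ℝ Λ]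
    (hKconv : Convex ℝ K) (hKcomp : IsCompact K) (hKint : (interior K).Nonempty)
    (n : Fin d → ℤ)
    (hdvd : ∀ i : Fin d, ∀ h : i.val + 1 < d, n ⟨i.val + 1, h⟩ ∣ n i)
    (hq : ∀ i : Fin d, ⌊2 / lam (i.val + 1) K Λ + 1⌋ ≤ n i) :
    (latCount K Λ : ℤ) ≤ ∏ i : Fin d, n i := by
  classical
  rcases Nat.eq_zero_or_pos d with hd0 | hd0
  · subst hd0
    have hsub : Subsingleton (Fin 0 → ℝ) := by infer_instance
    have h1 : (K ∩ (Λ : Set (Fin 0 → ℝ))).ncard ≤ 1 := by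
      have hss : (K ∩ (Λ : Set (Fin 0 → ℝ))).Subsingleton := fun x _ y _ => Subsingleton.elim x y
      rcases hss.eq_empty_or_singleton with h | ⟨a, h⟩ <;> rw [h] <;> simp
    simp only [latCount, Finset.univ_eq_empty, Finset.prod_empty]
    exact_mod_cast h1
  -- setup
  obtain ⟨x₀, hx₀⟩ := hKint
  have hx₀K : x₀ ∈ K := interior_subset hx₀
  set C : Set (Fin d → ℝ) := (2:ℝ)⁻¹ • (K - K) with hCdef
  have h0C : (0 : Fin d → ℝ) ∈ C := ⟨x₀ - x₀, sub_mem_sub hx₀K hx₀K, by simp⟩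
  have hCconv : Convex ℝ C := (hKconv.sub hKconv).smul _
  have hscale : ∀ s t : ℝ, 0 < s → s ≤ t → s • C ⊆ t • C := by
    intro s t hs hst x hx
    obtain ⟨c, hc, rfl⟩ := hx
    have ht : 0 < t := lt_of_lt_of_le hs hst
    have hdiv : 0 ≤ s / t := by positivity
    have hdiv1 : s / t ≤ 1 := (div_le_one ht).2 hst
    have hmem : (s/t) • c ∈ C := by
      have := hCconv hc h0C (b := 1 - s/t) hdiv (by linarith) (by ring)
      simpa using this
    refine ⟨(s/t) • c, hmem, ?_⟩
    show t • ((s/t) • c) = s • c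
    rw [smul_smul, mul_div_cancel₀ _ (ne_of_gt ht)]
  have hCbdd : ∃ R > (0:ℝ), ∀ x ∈ C, ‖x‖ ≤ R := by
    have hb : Bornology.IsBounded C := ((hKcomp.isBounded.sub hKcomp.isBounded).smul₀ _)
    obtain ⟨R, hR⟩ := hb.exists_norm_le
    exact ⟨max R 1, lt_of_lt_of_le one_pos (le_max_right _ _),
      fun x hx => le_trans (hR x hx) (le_max_left _ _)⟩
  have hball : ∃ ε > (0:ℝ), Metric.ball (0 : Fin d → ℝ) ε ⊆ C := by
    obtain ⟨ε', hε'0, hε'⟩ := Metric.isOpen_iff.1 isOpen_interior x₀ hx₀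
    refine ⟨ε'/2, by positivity, ?_⟩
    intro z hz
    rw [Metric.mem_ball, dist_zero_right] at hz
    have hmem : x₀ + (2:ℝ) • z ∈ K := by
      apply interior_subset
      apply hε'
      rw [Metric.mem_ball, dist_self_add_left, norm_smul]
      simp only [Real.norm_ofNat]
      linarith
    refine ⟨(x₀ + (2:ℝ) • z) - x₀, sub_mem_sub hmem hx₀K, ?_⟩
    show (2:ℝ)⁻¹ • ((x₀ + (2:ℝ) • z) - x₀) = z
    rw [add_sub_cancel_left, smul_smul]
    norm_num
  have hdisc : ∃ ρ > (0:ℝ), ∀ x : Fin d → ℝ, x ∈ Λ → ‖x‖ < ρ → x = 0 := by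
    have hopen : IsOpen ({0} : Set ↥Λ) := isOpen_discrete _
    rw [isOpen_induced_iff] at hopen
    obtain ⟨U, hU, hUeq⟩ := hopen
    have h0U : (0 : Fin d → ℝ) ∈ U := by
      have : (0 : ↥Λ) ∈ (Subtype.val ⁻¹' U : Set ↥Λ) := by rw [hUeq]; rfl
      simpa using this
    obtain ⟨ρ, hρ0, hρball⟩ := Metric.isOpen_iff.1 hU 0 h0U
    refine ⟨ρ, hρ0, ?_⟩
    intro x hx hxρ
    have : (⟨x, hx⟩ : ↥Λ) ∈ (Subtype.val ⁻¹' U : Set ↥Λ) := by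
      apply hρball
      rwa [Metric.mem_ball, dist_zero_right]
    rw [hUeq] at this
    exact congrArg Subtype.val this
  obtain ⟨R, hR0, hCR⟩ := hCbdd
  obtain ⟨ε, hε0, hεC⟩ := hball
  obtain ⟨ρ, hρ0, hρ⟩ := hdisc
  -- the sets S m
  set S : ℕ → Set ℝ := fun m =>
    {t : ℝ | 0 < t ∧ m ≤ finrank ℝ (Submodule.span ℝ ((t • C) ∩ (Λ : Set (Fin d → ℝ))))}
    with hSdef
  have hlam_eq : ∀ m, lam m K Λ = sInf (S m) := fun m => rfl
  have hSbdd : ∀ m, BddBelow (S m) := fun m => ⟨0, fun t ht => le_of_lt ht.1⟩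
  have hlam_le : ∀ m t, t ∈ S m → lam m K Λ ≤ t := fun m t ht => by
    rw [hlam_eq]; exact csInf_le (hSbdd m) ht
  have hnotin : ∀ m t, 0 < t → t < lam m K Λ →
      finrank ℝ (Submodule.span ℝ ((t • C) ∩ (Λ : Set (Fin d → ℝ)))) < m := by
    intro m t ht hlt
    by_contra hcon
    push_neg at hcon
    exact absurd (hlam_le m t ⟨ht, hcon⟩) (not_le.2 hlt)
  -- nonemptiness of S m for m ≤ d
  have hSne : ∃ t₀ > 0, ∀ m, m ≤ d → t₀ ∈ S m := by
    set bΛ := Module.Free.chooseBasis ℤ ↥Λ with hbΛ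
    set eb := Basis.ofZLatticeBasis ℝ Λ bΛ with heb
    set T : ℝ := 1 + ∑ i, ‖eb i‖ with hT
    have hT1 : 1 ≤ T := by
      rw [hT]
      have : 0 ≤ ∑ i, ‖eb i‖ := Finset.sum_nonneg (fun i _ => norm_nonneg _)
      linarith
    have hTi : ∀ i, ‖eb i‖ < T := by
      intro i
      rw [hT]
      have h1 : ‖eb i‖ ≤ ∑ j, ‖eb j‖ :=
        Finset.single_le_sum (f := fun j => ‖eb j‖) (fun j _ => norm_nonneg _) (Finset.mem_univ i)
      linarith
    refine ⟨T/ε, by positivity, ?_⟩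
    intro m hmd
    refine ⟨by positivity, ?_⟩
    have hsub : Set.range eb ⊆ ((T/ε) • C) ∩ (Λ : Set (Fin d → ℝ)) := by
      rintro _ ⟨i, rfl⟩
      constructor
      · refine ⟨(T/ε)⁻¹ • eb i, hεC ?_, ?_⟩
        · rw [Metric.mem_ball, dist_zero_right, norm_smul, Real.norm_eq_abs,
            abs_of_pos (by positivity)]
          rw [inv_mul_lt_iff₀ (by positivity)]
          calc ‖eb i‖ < T := hTi i
            _ = ε * (T/ε) := by field_simp
            _ ≤ (T/ε) * ε := by ring_nf; exact le_refl _
        · show (T/ε) • ((T/ε)⁻¹ • eb i) = eb i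
          rw [smul_smul, mul_inv_cancel₀ (by positivity), one_smul]
      · rw [heb, Basis.ofZLatticeBasis_apply]
        exact (bΛ i).2
    have hspan : Submodule.span ℝ (((T/ε) • C) ∩ (Λ : Set (Fin d → ℝ))) = ⊤ := by
      apply top_unique
      rw [← eb.span_eq]
      exact Submodule.span_mono hsub
    rw [hspan, finrank_top, finrank_fin_fun]
    exact hmd
  have hlam_pos : ∀ m, 1 ≤ m → m ≤ d → 0 < lam m K Λ := by
    obtain ⟨t₀, ht₀, hmem⟩ := hSne
    intro m h1 hmd
    rw [hlam_eq]
    have : 0 < ρ / R := by positivity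
    refine lt_of_lt_of_le this (le_csInf ⟨t₀, hmem m hmd⟩ ?_)
    intro t ht
    obtain ⟨htpos, hrk⟩ := ht
    -- find a nonzero lattice point in t • C
    have : ∃ x : Fin d → ℝ, x ∈ (t • C) ∩ Λ ∧ x ≠ 0 := by
      by_contra hcon
      push_neg at hcon
      have hsub : (t • C) ∩ (Λ : Set (Fin d → ℝ)) ⊆ {0} := by
        intro x hx
        by_contra hx0
        exact hx0 (hcon x hx)
      have hle : Submodule.span ℝ ((t • C) ∩ (Λ : Set (Fin d → ℝ))) ≤ ⊥ :=
        Submodule.span_le.2 (by rw [Submodule.bot_coe]; exact hsub)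
      rw [le_bot_iff] at hle
      rw [hle, finrank_bot] at hrk
      omega
    obtain ⟨x, ⟨hxC, hxΛ⟩, hx0⟩ := this
    obtain ⟨c, hc, rfl⟩ := hxC
    have hc0 : c ≠ 0 := by
      intro h; apply hx0; show t • c = 0; rw [h, smul_zero]
    have h1 : ρ ≤ ‖t • c‖ := by
      by_contra hcon
      exact hx0 (hρ _ hxΛ (not_le.1 hcon))
    have h2 : ‖t • c‖ ≤ t * R := by
      rw [norm_smul, Real.norm_eq_abs, abs_of_pos htpos]
      exact mul_le_mul_of_nonneg_left (hCR c hc) (le_of_lt htpos)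
    rw [div_le_iff₀ hR0]
    nlinarith

  -- facts about n
  have hlam_pos' : ∀ i : Fin d, 0 < lam (i.val+1) K Λ :=
    fun i => hlam_pos (i.val+1) (by omega) i.2
  have hn1 : ∀ i : Fin d, 1 ≤ n i := by
    intro i
    refine le_trans ?_ (hq i)
    rw [Int.le_floor]
    have h1 := hlam_pos' i
    have h2 : 0 < 2 / lam (i.val+1) K Λ := by positivity
    push_cast
    linarith
  have hnd : ∀ i j : Fin d, i ≤ j → n j ∣ n i := by
    have key : ∀ (b a : ℕ) (ha : a < d) (hb : b < d), a ≤ b → n ⟨b,hb⟩ ∣ n ⟨a,ha⟩ := by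
      intro b
      induction b with
      | zero =>
        intro a ha hb hab
        have : a = 0 := by omega
        subst this
        exact dvd_rfl
      | succ b ih =>
        intro a ha hb hab
        rcases Nat.eq_or_lt_of_le hab with h | h
        · subst h
          exact dvd_rfl
        · have hb' : b < d := by omega
          have hab' : a ≤ b := by omega
          exact dvd_trans (hdvd ⟨b, hb'⟩ hb) (ih a ha hb' hab')
    intro i j hij
    have := key j.val i.val i.2 j.2 hij
    simpa using this
  have hnpos : ∀ i : Fin d, (0:ℤ) < n i := fun i => lt_of_lt_of_le zero_lt_one (hn1 i)
  have hnmono : ∀ i j : Fin d, i ≤ j → n j ≤ n i :=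
    fun i j hij => Int.le_of_dvd (hnpos i) (hnd i j hij)
  set tv : Fin d → ℝ := fun i => 2 / (n i) with htvdef
  have hnRpos : ∀ i : Fin d, (0:ℝ) < (n i : ℝ) := fun i => by exact_mod_cast hnpos i
  have htvpos : ∀ i, 0 < tv i := fun i => div_pos two_pos (hnRpos i)
  have htvmono : ∀ i j : Fin d, i ≤ j → tv i ≤ tv j := by
    intro i j hij
    apply div_le_div_of_nonneg_left (by norm_num) (hnRpos j)
    exact_mod_cast hnmono i j hij
  have htvlt : ∀ i : Fin d, tv i < lam (i.val+1) K Λ := by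
    intro i
    have hlpos := hlam_pos' i
    have h1 : ((⌊2 / lam (i.val+1) K Λ + 1⌋ : ℤ) : ℝ) ≤ (n i : ℝ) := by exact_mod_cast hq i
    have h2 : 2 / lam (i.val+1) K Λ < ((⌊2 / lam (i.val+1) K Λ + 1⌋ : ℤ) : ℝ) := by
      have := Int.sub_one_lt_floor (2 / lam (i.val+1) K Λ + 1)
      linarith
    have h3 : 2 / lam (i.val+1) K Λ < (n i : ℝ) := lt_of_lt_of_le h2 h1
    rw [div_lt_iff₀ hlpos] at h3
    show 2 / (n i : ℝ) < lam (i.val+1) K Λ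
    rw [div_lt_iff₀ (hnRpos i)]
    nlinarith
  -- the subspaces V i
  set V : Fin d → Submodule ℝ (Fin d → ℝ) :=
    fun i => Submodule.span ℝ ((tv i • C) ∩ (Λ : Set (Fin d → ℝ))) with hVdef
  have hVrk : ∀ i : Fin d, finrank ℝ (V i) ≤ i.val := by
    intro i
    exact Nat.lt_succ_iff.mp (hnotin (i.val+1) (tv i) (htvpos i) (htvlt i))
  haveI hfinite : Module.Finite ℤ ↥Λ := ZLattice.module_finite ℝ Λ
  have hrankΛ : finrank ℤ ↥Λ = d := by rw [ZLattice.rank ℝ Λ, finrank_fin_fun]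
  -- rank bound on the comap submodules
  have hWrk : ∀ i : Fin d,
      finrank ℤ ↥(Submodule.comap (Λ.subtype) ((V i).restrictScalars ℤ)) ≤ i.val := by
    intro i
    set L' : Submodule ℤ ↥(V i) :=
      Submodule.comap (((V i).subtype).restrictScalars ℤ) Λ with hL'def
    haveI hdiscL : DiscreteTopology ↥L' := by
      haveI : DiscreteTopology ↥(Λ : Set (Fin d → ℝ)) := ‹DiscreteTopology ↥Λ›
      exact DiscreteTopology.preimage_of_continuous_injective (Λ : Set (Fin d → ℝ))
        (LinearMap.continuous_of_finiteDimensional ((V i).subtype))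
        (Submodule.injective_subtype (V i))
    have hmap : Submodule.map ((V i).subtype)
        ((Submodule.span ℝ ((L' : Set ↥(V i))) : Submodule ℝ ↥(V i))) = V i := by
      rw [Submodule.map_span]
      apply le_antisymm
      · rw [Submodule.span_le]
        rintro _ ⟨y, hy, rfl⟩
        exact y.2
      · have hgen : (tv i • C) ∩ (Λ : Set (Fin d → ℝ)) ⊆
            ⇑(V i).subtype '' (L' : Set ↥(V i)) := by
          intro g hg
          exact ⟨⟨g, Submodule.subset_span hg⟩, hg.2, rfl⟩
        have hVi : V i = Submodule.span ℝ ((tv i • C) ∩ (Λ : Set (Fin d → ℝ))) := rfl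
        exact le_trans (le_of_eq hVi) (Submodule.span_mono hgen)
    haveI hZL : IsZLattice ℝ L' := by
      constructor
      apply Submodule.map_injective_of_injective (Submodule.injective_subtype (V i))
      rw [hmap, Submodule.map_top, Submodule.range_subtype]
    haveI : ProperSpace ↥(V i) := by infer_instance
    have h1 : finrank ℤ ↥L' = finrank ℝ ↥(V i) := ZLattice.rank ℝ L'
    have heqv : ↥(Submodule.comap (Λ.subtype) ((V i).restrictScalars ℤ)) ≃ₗ[ℤ] ↥L' :=
      { toFun := fun x => ⟨⟨(x.1 : Fin d → ℝ), x.2⟩, x.1.2⟩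
        invFun := fun y => ⟨⟨(y.1 : Fin d → ℝ), y.2⟩, y.1.2⟩
        map_add' := fun x y => rfl
        map_smul' := fun k x => rfl
        left_inv := fun x => rfl
        right_inv := fun y => rfl }
    have h2 : finrank ℤ ↥(Submodule.comap (Λ.subtype) ((V i).restrictScalars ℤ))
        = finrank ℤ ↥L' := LinearEquiv.finrank_eq heqv
    rw [h2, h1]
    exact hVrk i
  -- apply the adapted basis lemma
  set Wfun : ℕ → Submodule ℤ ↥Λ := fun j =>
    if h : j < d then Submodule.comap (Λ.subtype) ((V ⟨j, h⟩).restrictScalars ℤ) else ⊤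
    with hWfundef
  obtain ⟨b, hbprop⟩ := adapted_basis ℤ d ↥Λ hrankΛ Wfun
    (by
      intro i j hij
      by_cases hi : i < d
      · by_cases hj : j < d
        · simp only [hWfundef, dif_pos hi, dif_pos hj]
          apply Submodule.comap_mono
          have : (⟨i, hi⟩ : Fin d) ≤ ⟨j, hj⟩ := hij
          have hsub : tv ⟨i,hi⟩ • C ⊆ tv ⟨j,hj⟩ • C :=
            hscale _ _ (htvpos _) (htvmono _ _ this)
          intro x hx
          exact Submodule.span_mono (Set.inter_subset_inter_left _ hsub) hx
        · simp only [hWfundef, dif_neg hj]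
          exact le_top
      · have hj : ¬ j < d := by omega
        simp only [hWfundef, dif_neg hi, dif_neg hj]
        exact le_refl _
    )
    (by
      intro j k x hk hx
      by_cases h : j < d
      · simp only [hWfundef, dif_pos h] at hx ⊢
        rw [Submodule.mem_comap] at hx ⊢
        rw [map_smul] at hx
        rw [Submodule.restrictScalars_mem] at hx ⊢
        have hx' : (k:ℝ) • (Λ.subtype x : Fin d → ℝ) ∈ V ⟨j,h⟩ := by
          rwa [Int.cast_smul_eq_zsmul]
        have := (V ⟨j,h⟩).smul_mem ((k:ℝ)⁻¹) hx'
        rwa [inv_smul_smul₀ (by exact_mod_cast hk)] at this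
      · simp [hWfundef, dif_neg h]
    )
    (by
      intro j
      by_cases h : j < d
      · have hWj : Wfun j = Submodule.comap (Λ.subtype) ((V ⟨j, h⟩).restrictScalars ℤ) := by
          rw [hWfundef]; exact dif_pos h
        rw [hWj]
        exact hWrk ⟨j, h⟩
      · have hWj : Wfun j = ⊤ := by rw [hWfundef]; exact dif_neg h
        rw [hWj, finrank_top, hrankΛ]
        omega
    )
  -- finiteness of K ∩ Λ
  have hclosed : IsClosed (Λ : Set (Fin d → ℝ)) := by
    haveI : DiscreteTopology ↥(Λ.toAddSubgroup) := ‹DiscreteTopology ↥Λ›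
    exact AddSubgroup.isClosed_of_discrete (H := Λ.toAddSubgroup)
  have hfin : (K ∩ (Λ : Set (Fin d → ℝ))).Finite := by
    haveI : DiscreteTopology ↥(Λ : Set (Fin d → ℝ)) := ‹DiscreteTopology ↥Λ›
    exact Metric.finite_isBounded_inter_isClosed DiscreteTopology.isDiscrete hKcomp.isBounded hclosed
  -- pigeonhole
  haveI hfint : Fintype ↥(K ∩ (Λ : Set (Fin d → ℝ))) := hfin.fintype
  haveI hzmfin : ∀ i : Fin d, Fintype (ZMod (n i).toNat) := by
    intro i
    haveI : NeZero ((n i).toNat) := ⟨by have := hn1 i; omega⟩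
    infer_instance
  by_contra hcon
  push_neg at hcon
  have hcard2 : Fintype.card (∀ i : Fin d, ZMod (n i).toNat) = (∏ i : Fin d, n i).toNat := by
    rw [Fintype.card_pi]
    have : ∀ i : Fin d, Fintype.card (ZMod (n i).toNat) = (n i).toNat := by
      intro i
      haveI : NeZero ((n i).toNat) := ⟨by have := hn1 i; omega⟩
      exact ZMod.card _
    rw [Finset.prod_congr rfl (fun i _ => this i)]
    have h2 : ((∏ i : Fin d, (n i).toNat : ℕ) : ℤ) = ((∏ i : Fin d, n i).toNat : ℤ) := by
      rw [Int.toNat_of_nonneg (Finset.prod_nonneg (fun i _ => (hnpos i).le))]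
      push_cast
      exact Finset.prod_congr rfl (fun i _ => Int.toNat_of_nonneg (hnpos i).le)
    exact_mod_cast h2
  have hcard1 : Fintype.card ↥(K ∩ (Λ : Set (Fin d → ℝ))) = latCount K Λ := by
    rw [latCount, ← Nat.card_coe_set_eq, Nat.card_eq_fintype_card]
  have hlt : Fintype.card (∀ i : Fin d, ZMod (n i).toNat) <
      Fintype.card ↥(K ∩ (Λ : Set (Fin d → ℝ))) := by
    rw [hcard1, hcard2]
    have h2 : ((∏ i : Fin d, n i).toNat : ℤ) = ∏ i : Fin d, n i :=
      Int.toNat_of_nonneg (Finset.prod_nonneg (fun i _ => (hnpos i).le))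
    have h3 : ((∏ i : Fin d, n i).toNat : ℤ) < (latCount K Λ : ℤ) := by rw [h2]; exact hcon
    exact_mod_cast h3
  set F : ↥(K ∩ (Λ : Set (Fin d → ℝ))) → ↥Λ := fun u => ⟨u.1, u.2.2⟩ with hF
  obtain ⟨x, y, hxy, hfeq⟩ := Fintype.exists_ne_map_eq_of_card_lt
    (fun (u : ↥(K ∩ (Λ : Set (Fin d → ℝ)))) (i : Fin d) =>
      ((b.repr (F u) i : ℤ) : ZMod (n i).toNat)) hlt
  set zx : ↥Λ := F x with hzx
  set zy : ↥Λ := F y with hzy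
  set z : ↥Λ := zx - zy with hz
  have hzne : z ≠ 0 := by
    intro h
    apply hxy
    have h1 : zx = zy := by rwa [hz, sub_eq_zero] at h
    have h2 : x.1 = y.1 := congrArg (fun v : ↥Λ => (v : Fin d → ℝ)) h1
    exact Subtype.ext h2
  set m : Fin d → ℤ := fun i => b.repr z i with hm
  have hmdvd : ∀ i, n i ∣ m i := by
    intro i
    have hrepr_sub : m i = b.repr zx i - b.repr zy i := by
      show b.repr z i = _
      rw [hz, map_sub, Finsupp.sub_apply]
    have hcast : ((m i : ℤ) : ZMod (n i).toNat) = 0 := by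
      rw [hrepr_sub]
      push_cast
      rw [sub_eq_zero]
      exact congrFun hfeq i
    rw [ZMod.intCast_zmod_eq_zero_iff_dvd] at hcast
    rwa [Int.toNat_of_nonneg (hnpos i).le] at hcast
  have hmne : ∃ i, m i ≠ 0 := by
    by_contra hcon2
    push_neg at hcon2
    apply hzne
    apply b.repr.map_eq_zero_iff.1
    ext i
    exact hcon2 i
  set jset : Finset (Fin d) := Finset.univ.filter (fun i => m i ≠ 0) with hjsetdef
  have hjne : jset.Nonempty := by
    obtain ⟨i, hi⟩ := hmne
    exact ⟨i, by simp [hjsetdef, hi]⟩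
  set j : Fin d := jset.max' hjne with hjdef
  have hmj : m j ≠ 0 := by
    have := jset.max'_mem hjne
    simp only [hjsetdef, Finset.mem_filter] at this
    exact this.2
  have hmzero : ∀ i, j < i → m i = 0 := by
    intro i hi
    by_contra hne
    have hmem : i ∈ jset := by simp [hjsetdef, hne]
    exact absurd (jset.le_max' i hmem) (not_le.2 hi)
  have hjdvd : ∀ i, n j ∣ m i := by
    intro i
    rcases le_or_gt i j with h | h
    · exact dvd_trans (hnd i j h) (hmdvd i)
    · rw [hmzero i h]; exact dvd_zero _
  set w : ↥Λ := ∑ i, (m i / n j) • b i with hw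
  have hnjw : (n j) • w = z := by
    rw [hw, Finset.smul_sum]
    have hterm : ∀ i : Fin d, (n j) • ((m i / n j) • b i) = (m i) • b i := by
      intro i
      rw [smul_smul]
      congr 1
      rw [mul_comm]
      exact Int.ediv_mul_cancel (hjdvd i)
    rw [Finset.sum_congr rfl (fun i _ => hterm i)]
    simp only [hm]
    exact b.sum_repr z
  have hreprw : ∀ i, b.repr w i = m i / n j := by
    intro i
    rw [hw]
    exact congrFun (Basis.repr_sum_self b (fun i => m i / n j)) i
  have hwj : b.repr w j ≠ 0 := by
    rw [hreprw]
    intro h0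
    apply hmj
    have hh := Int.ediv_mul_cancel (hjdvd j)
    rw [h0, zero_mul] at hh
    exact hh.symm
  have hzKK : ((z : ↥Λ) : Fin d → ℝ) ∈ (2:ℝ) • C := by
    have h2C : (2:ℝ) • C = K - K := by
      rw [hCdef, smul_smul, show (2:ℝ) * (2:ℝ)⁻¹ = 1 by norm_num, one_smul]
    rw [h2C]
    have : ((z : ↥Λ) : Fin d → ℝ) = (x.1 : Fin d → ℝ) - (y.1 : Fin d → ℝ) := by
      rw [hz]; rfl
    rw [this]
    exact sub_mem_sub x.2.1 y.2.1
  obtain ⟨c0, hc0, hc0eq⟩ := hzKK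
  have hcoe : ((n j : ℝ)) • ((w : ↥Λ) : Fin d → ℝ) = ((z : ↥Λ) : Fin d → ℝ) := by
    have h1 := congrArg (fun v : ↥Λ => (v : Fin d → ℝ)) hnjw
    simp only [Submodule.coe_smul] at h1
    rw [Int.cast_smul_eq_zsmul]
    exact h1
  have hwz : ((w : ↥Λ) : Fin d → ℝ) = ((n j : ℝ))⁻¹ • ((z : ↥Λ) : Fin d → ℝ) := by
    rw [← hcoe, inv_smul_smul₀ (ne_of_gt (hnRpos j))]
  have hwC : ((w : ↥Λ) : Fin d → ℝ) ∈ tv j • C := by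
    refine ⟨c0, hc0, ?_⟩
    show tv j • c0 = ((w : ↥Λ) : Fin d → ℝ)
    rw [hwz, ← hc0eq, smul_smul]
    congr 1
    show (2:ℝ) / (n j : ℝ) = _
    field_simp
  have hwW : w ∈ Wfun j.val := by
    have hWj : Wfun j.val = Submodule.comap (Λ.subtype) ((V ⟨j.val, j.2⟩).restrictScalars ℤ) := by
      rw [hWfundef]; exact dif_pos j.2
    rw [hWj]
    rw [Submodule.mem_comap, Submodule.restrictScalars_mem]
    apply Submodule.subset_span
    exact ⟨hwC, w.2⟩
  have hfinal := hbprop j.val w hwW j (le_refl _)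
  exact hwj hfinal
end

section
/- Let K be a (not necessarily 0-symmetric) convex body in ℝ^d and Λ a lattice. Then G(K,Λ) ≤ ⌊2/λ_1(K,Λ) + 1⌋^d, where λ_1(K,Λ) is the first successive minimum of (1/2)(K−K) with respect to Λ. -/
open Pointwise Set

lemma aux_finrank_pos {E : Type*} [NormedAddCommGroup E] [NormedSpace ℝ E]
    [FiniteDimensional ℝ E] {s : Set E} {y : E} (hy : y ∈ s) (hy0 : y ≠ 0) :
    1 ≤ Module.finrank ℝ (Submodule.span ℝ s) := by
  have : Nontrivial (Submodule.span ℝ s) := by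
    refine ⟨⟨y, Submodule.subset_span hy⟩, 0, ?_⟩
    simpa [Subtype.ext_iff] using hy0
  exact Module.finrank_pos_iff.mpr this

lemma aux_exists_nonzero {E : Type*} [NormedAddCommGroup E] [NormedSpace ℝ E]
    {s : Set E} (h : 1 ≤ Module.finrank ℝ (Submodule.span ℝ s)) :
    ∃ y ∈ s, y ≠ 0 := by
  by_contra hc
  push_neg at hc
  have hs : s ⊆ {0} := fun x hx => hc x hx
  have : Submodule.span ℝ s ≤ ⊥ := by
    simpa using Submodule.span_mono (R := ℝ) hs
  have hbot : Submodule.span ℝ s = ⊥ := le_bot_iff.mp this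
  rw [hbot] at h
  simp at h

theorem stmt5 {d : ℕ} (K : Set (Fin d → ℝ)) (Λ : Submodule ℤ (Fin d → ℝ))
    [DiscreteTopology Λ] [IsZLattice ℝ Λ]
    (hKconv : Convex ℝ K) (hKcomp : IsCompact K) (hKint : (interior K).Nonempty) :
    (latCount K Λ : ℤ) ≤ (⌊2 / lam 1 K Λ + 1⌋) ^ d := by
  classical
  -- case d = 0
  rcases Nat.eq_zero_or_pos d with hd0 | hd0
  · have hsub : (K ∩ (Λ : Set (Fin d → ℝ))).Subsingleton := by
      have : Subsingleton (Fin d → ℝ) := by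
        subst hd0; infer_instance
      exact fun x _ y _ => Subsingleton.elim x y
    have h1 : latCount K Λ ≤ 1 := by
      rw [latCount, Set.ncard_le_one_iff hsub.finite]
      exact fun ha hb => hsub ha hb
    subst hd0
    simpa using (by exact_mod_cast h1 : (latCount K Λ : ℤ) ≤ 1)
  set C : Set (Fin d → ℝ) := (2:ℝ)⁻¹ • (K - K) with hC
  set S : Set ℝ := {t : ℝ | 0 < t ∧
      1 ≤ Module.finrank ℝ (Submodule.span ℝ ((t • C) ∩ (Λ : Set (Fin d → ℝ))))} with hS
  have hlam : lam 1 K Λ = sInf S := rfl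
  -- discreteness : nonzero lattice points have norm ≥ ε
  obtain ⟨ε, hε, hball⟩ : ∃ ε > 0, ∀ x ∈ Λ, ‖x‖ < ε → x = 0 := by
    have hop : IsOpen ({0} : Set Λ) := isOpen_discrete _
    rw [Metric.isOpen_iff] at hop
    obtain ⟨ε, hε', h⟩ := hop 0 rfl
    refine ⟨ε, hε', fun x hx hnx => ?_⟩
    have : (⟨x, hx⟩ : Λ) ∈ Metric.ball (0 : Λ) ε := by
      simpa [Metric.mem_ball, dist_eq_norm, Submodule.norm_coe] using hnx
    simpa [Subtype.ext_iff] using h this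
  -- K is bounded by some R > 0
  obtain ⟨R, hRpos, hR⟩ : ∃ R > 0, ∀ x ∈ K, ‖x‖ ≤ R := by
    obtain ⟨R, hR⟩ := hKcomp.isBounded.subset_closedBall 0
    refine ⟨max R 1, by positivity, fun x hx => ?_⟩
    exact le_trans (by simpa using hR hx) (le_max_left _ _)
  -- C bounded by R
  have hCbound : ∀ z ∈ C, ‖z‖ ≤ R := by
    rintro z ⟨w, ⟨a, ha, b, hb, rfl⟩, rfl⟩
    have : ‖(2:ℝ)⁻¹ • (a - b)‖ = 2⁻¹ * ‖a - b‖ := by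
      rw [norm_smul]; norm_num
    rw [this]
    have := norm_sub_le a b
    have ha' := hR a ha
    have hb' := hR b hb
    linarith
  -- lower bound on S
  have hSlb : ∀ t ∈ S, ε / R ≤ t := by
    rintro t ⟨ht, hrk⟩
    obtain ⟨y, ⟨⟨c, hc, rfl⟩, hyΛ⟩, hy0⟩ := aux_exists_nonzero hrk
    have hcy : ‖t • c‖ ≤ t * R := by
      rw [norm_smul, Real.norm_eq_abs, abs_of_pos ht]
      exact mul_le_mul_of_nonneg_left (hCbound c hc) ht.le
    have hylb : ε ≤ ‖t • c‖ := by
      by_contra h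
      exact hy0 (hball _ hyΛ (lt_of_not_ge h))
    rw [div_le_iff₀ hRpos]
    exact le_trans hylb hcy
  -- S is nonempty
  have hSne : S.Nonempty := by
    obtain ⟨x₀, hx₀⟩ := hKint
    obtain ⟨r, hr, hball₀⟩ := Metric.isOpen_iff.mp isOpen_interior x₀ hx₀
    -- a nonzero lattice point exists
    obtain ⟨y, hyΛ, hy0⟩ : ∃ y ∈ Λ, y ≠ (0 : Fin d → ℝ) := by
      by_contra hc
      push_neg at hc
      have hbot : (Λ : Set (Fin d → ℝ)) ⊆ {0} := fun x hx => hc x hx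
      have htop : Submodule.span ℝ (Λ : Set (Fin d → ℝ)) = ⊤ := IsZLattice.span_top
      have hle : Submodule.span ℝ (Λ : Set (Fin d → ℝ)) ≤ ⊥ := by
        simpa using Submodule.span_mono (R := ℝ) hbot
      rw [htop] at hle
      have : Module.finrank ℝ (Fin d → ℝ) = 0 := by
        have hbt : (⊤ : Submodule ℝ (Fin d → ℝ)) = ⊥ := le_bot_iff.mp hle
        have := Subsingleton.intro (α := Fin d → ℝ) (fun a b => by
          have ha : a ∈ (⊥ : Submodule ℝ (Fin d → ℝ)) := hbt ▸ Submodule.mem_top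
          have hb : b ∈ (⊥ : Submodule ℝ (Fin d → ℝ)) := hbt ▸ Submodule.mem_top
          simp only [Submodule.mem_bot] at ha hb
          rw [ha, hb])
        exact Module.finrank_zero_of_subsingleton
      rw [Module.finrank_fin_fun] at this
      omega
    set t : ℝ := 4 * ‖y‖ / r with ht
    have hy0' : 0 < ‖y‖ := norm_pos_iff.mpr hy0
    have htpos : 0 < t := by positivity
    refine ⟨t, htpos, ?_⟩
    have hyC : y ∈ t • C ∩ (Λ : Set (Fin d → ℝ)) := by
      refine ⟨?_, hyΛ⟩
      refine Set.mem_smul_set.mpr ⟨t⁻¹ • y, ?_, by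
        rw [smul_smul, mul_inv_cancel₀ (ne_of_gt htpos), one_smul]⟩
      refine Set.mem_smul_set.mpr ⟨(2:ℝ) • t⁻¹ • y, ?_, by
        rw [smul_smul, smul_smul]; norm_num⟩
      have hnorm : ‖(2:ℝ) • t⁻¹ • y‖ < r := by
        rw [norm_smul, norm_smul, Real.norm_eq_abs, Real.norm_eq_abs,
          abs_of_pos (by norm_num : (0:ℝ) < 2), abs_of_pos (inv_pos.mpr htpos)]
        have h4 : t⁻¹ * ‖y‖ = r / 4 := by
          rw [ht]; field_simp
        rw [h4]; linarith
      have hmem : x₀ + (2:ℝ) • t⁻¹ • y ∈ K := by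
        apply interior_subset
        apply hball₀
        simp [Metric.mem_ball, dist_eq_norm]
        simpa [add_sub_cancel_left] using hnorm
      have := Set.sub_mem_sub hmem (interior_subset hx₀)
      simpa [add_sub_cancel_left] using this
    exact aux_finrank_pos hyC hy0
  -- λ₁ is positive
  have hBdd : BddBelow S := ⟨0, fun t ht => ht.1.le⟩
  have hlampos : 0 < lam 1 K Λ := by
    rw [hlam]
    exact lt_of_lt_of_le (by positivity) (le_csInf hSne hSlb)
  set lam1 := lam 1 K Λ with hlam1
  -- the modulus M
  set M : ℕ := (⌊2 / lam1 + 1⌋).toNat with hMdef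
  have hfloor_nonneg : (0:ℤ) ≤ ⌊2 / lam1 + 1⌋ := by
    have : (0:ℝ) ≤ 2 / lam1 + 1 := by positivity
    exact Int.le_floor.mpr (by exact_mod_cast this)
  have hMcast : ((M : ℤ)) = ⌊2 / lam1 + 1⌋ := Int.toNat_of_nonneg hfloor_nonneg
  have hMreal : (2 / lam1 : ℝ) < (M : ℝ) := by
    have h1 : (⌊2 / lam1 + 1⌋ : ℝ) = (⌊2 / lam1⌋ : ℝ) + 1 := by
      rw_mod_cast [Int.floor_add_one]
    have h2 : (2 / lam1 : ℝ) < (⌊2 / lam1⌋ : ℝ) + 1 := Int.lt_floor_add_one _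
    have : ((M : ℤ) : ℝ) = (⌊2 / lam1 + 1⌋ : ℝ) := by exact_mod_cast hMcast
    push_cast at this ⊢
    rw [this, h1]
    exact h2
  have hMpos : 0 < M := by
    by_contra h
    push_neg at h
    interval_cases M
    simp at hMreal
    have : (0:ℝ) < 2 / lam1 := by positivity
    linarith
  haveI : NeZero M := ⟨hMpos.ne'⟩
  have h2M : (0:ℝ) < 2 / (M : ℝ) := by positivity
  have h2Mlt : 2 / (M : ℝ) < lam1 := by
    rw [div_lt_iff₀ (by exact_mod_cast hMpos : (0:ℝ) < (M:ℝ))]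
    calc (2:ℝ) = (2 / lam1) * lam1 := by field_simp
      _ < (M:ℝ) * lam1 := by
          exact mul_lt_mul_of_pos_right hMreal hlampos
      _ = lam1 * (M:ℝ) := mul_comm _ _
  -- basis of the lattice
  haveI hfree : Module.Free ℤ Λ := ZLattice.module_free ℝ Λ
  haveI hfin : Module.Finite ℤ Λ := ZLattice.module_finite ℝ Λ
  set ι := Module.Free.ChooseBasisIndex ℤ Λ with hι
  set b : Module.Basis ι ℤ Λ := Module.Free.chooseBasis ℤ Λ with hb
  have hcardι : Fintype.card ι = d := by
    rw [← Module.finrank_eq_card_chooseBasisIndex, ZLattice.rank ℝ Λ, Module.finrank_fin_fun]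
  -- the reduction map
  set f : ↥(K ∩ (Λ : Set (Fin d → ℝ))) → (ι → ZMod M) :=
    fun x i => ((b.repr ⟨x.1, x.2.2⟩ i : ℤ) : ZMod M) with hf
  have hinj : Function.Injective f := by
    intro x y hxy
    by_contra hne
    have hne' : (x : Fin d → ℝ) ≠ (y : Fin d → ℝ) := fun h => hne (Subtype.ext h)
    set x' : Λ := ⟨x.1, x.2.2⟩ with hx'
    set y' : Λ := ⟨y.1, y.2.2⟩ with hy'
    have hdvd : ∀ i, (M : ℤ) ∣ b.repr (x' - y') i := by
      intro i
      have h0 : ((b.repr x' i : ℤ) : ZMod M) = ((b.repr y' i : ℤ) : ZMod M) :=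
        congrFun hxy i
      have : ((b.repr (x' - y') i : ℤ) : ZMod M) = 0 := by
        rw [map_sub, Finsupp.sub_apply]
        push_cast
        rw [h0]; ring
      exact_mod_cast (ZMod.intCast_zmod_eq_zero_iff_dvd _ M).mp this
    set w : Λ := ∑ i, ((b.repr (x' - y') i) / (M : ℤ)) • b i with hw
    have hMw : (M : ℤ) • w = x' - y' := by
      rw [hw, Finset.smul_sum]
      have : ∀ i ∈ Finset.univ, (M : ℤ) • ((b.repr (x' - y') i / (M : ℤ)) • b i)
          = b.repr (x' - y') i • b i := by
        intro i _
        rw [smul_smul]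
        congr 1
        rw [mul_comm]
        exact Int.ediv_mul_cancel (hdvd i)
      rw [Finset.sum_congr rfl this, Module.Basis.sum_repr]
    have hw0 : (w : Fin d → ℝ) ≠ 0 := by
      intro h
      have hwz : w = 0 := by
        exact Subtype.ext h
      rw [hwz, smul_zero] at hMw
      have : x' = y' := by
        have := hMw.symm
        rwa [sub_eq_zero] at this
      exact hne' (congrArg (fun z : Λ => (z : Fin d → ℝ)) this)
    -- w lies in (2/M) • C
    have hwval : (w : Fin d → ℝ) = ((M : ℝ))⁻¹ • ((x : Fin d → ℝ) - (y : Fin d → ℝ)) := by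
      have h1 : (((M : ℤ) • w : Λ) : Fin d → ℝ) = ((x : Fin d → ℝ) - (y : Fin d → ℝ)) := by
        rw [hMw]; rfl
      have h2 : (((M : ℤ) • w : Λ) : Fin d → ℝ) = ((M : ℝ)) • (w : Fin d → ℝ) := by
        push_cast
        rw [← Int.cast_smul_eq_zsmul ℝ (M : ℤ) (w : Fin d → ℝ)]
        push_cast
        rfl
      rw [h2] at h1
      rw [← h1, smul_smul, inv_mul_cancel₀ (by exact_mod_cast hMpos.ne' : (M:ℝ) ≠ 0), one_smul]
    have hwC : (w : Fin d → ℝ) ∈ (2 / (M:ℝ)) • C ∩ (Λ : Set (Fin d → ℝ)) := by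
      refine ⟨?_, w.2⟩
      refine Set.mem_smul_set.mpr ⟨(2:ℝ)⁻¹ • ((x : Fin d → ℝ) - (y : Fin d → ℝ)), ?_, ?_⟩
      · exact Set.smul_mem_smul_set (Set.sub_mem_sub x.2.1 y.2.1)
      · rw [smul_smul, hwval]
        congr 1
        field_simp
    have hmemS : (2 / (M:ℝ)) ∈ S := ⟨h2M, aux_finrank_pos hwC hw0⟩
    have : lam1 ≤ 2 / (M:ℝ) := by
      rw [hlam]
      exact csInf_le hBdd hmemS
    linarith
  -- conclude by counting
  haveI : Finite ↥(K ∩ (Λ : Set (Fin d → ℝ))) := Finite.of_injective f hinj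
  have hcount : latCount K Λ ≤ M ^ d := by
    rw [latCount, ← Nat.card_coe_set_eq]
    calc Nat.card ↥(K ∩ (Λ : Set (Fin d → ℝ))) ≤ Nat.card (ι → ZMod M) :=
          Nat.card_le_card_of_injective f hinj
      _ = M ^ d := by
          rw [Nat.card_eq_fintype_card, Fintype.card_fun, ZMod.card, hcardι]
  calc (latCount K Λ : ℤ) ≤ ((M : ℤ)) ^ d := by exact_mod_cast hcount
    _ = (⌊2 / lam1 + 1⌋) ^ d := by rw [hMcast]
end

section
/- For every sequence of positive integers x_1 ≤ x_2 ≤ … ≤ x_d there exists a sequence of positive integers y_1, …, y_d with x_i ≤ y_i for all i, y_i dividing y_{i+1} for 1 ≤ i ≤ d−1, and (y_1⋯y_d)/(x_1⋯x_d) ≤ (4/e)·(√3)^{d−1}. -/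
namespace Stmt7Aux

/-- round `v` up to the least `c * 2^k ≥ v` (for `k ≥ 0`). -/
def rup (c v : ℕ) : ℕ := c * 2 ^ Nat.clog 2 ((v + (c - 1)) / c)

lemma rup_pos {c : ℕ} (hc : 0 < c) (v : ℕ) : 0 < rup c v := by
  have : 0 < 2 ^ Nat.clog 2 ((v + (c - 1)) / c) := Nat.pow_pos (by norm_num)
  exact Nat.mul_pos hc this

lemma le_rup {c : ℕ} (hc : 0 < c) (v : ℕ) : v ≤ rup c v := by
  have h1 : v ≤ c * ((v + (c - 1)) / c) := by
    have hd := Nat.div_add_mod (v + (c - 1)) c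
    have hm : (v + (c - 1)) % c < c := Nat.mod_lt _ hc
    omega
  calc v ≤ c * ((v + (c - 1)) / c) := h1
    _ ≤ c * 2 ^ Nat.clog 2 ((v + (c - 1)) / c) :=
        Nat.mul_le_mul_left _ (Nat.le_pow_clog (by norm_num) _)

lemma rup_le {c v k : ℕ} (hc : 0 < c) (h : v ≤ c * 2 ^ k) : rup c v ≤ c * 2 ^ k := by
  apply Nat.mul_le_mul_left
  apply Nat.pow_le_pow_right (by norm_num)
  rw [Nat.clog_le_iff_le_pow (by norm_num)]
  -- (v + (c-1)) / c ≤ 2 ^ k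
  have h2 : v + (c - 1) < (2 ^ k + 1) * c := by
    have h3 : (2 ^ k + 1) * c = c * 2 ^ k + c := by ring
    omega
  have := (Nat.div_lt_iff_lt_mul hc).2 h2
  omega

lemma rup_dvd {c v w : ℕ} (h : v ≤ w) : rup c v ∣ rup c w :=
  mul_dvd_mul_left c (pow_dvd_pow 2 (Nat.clog_mono_right 2 (Nat.div_le_div_right (by omega))))

end Stmt7Aux

namespace Stmt7Aux

def RA (v : ℕ) : ℕ := rup 1 v
def RB (v : ℕ) : ℕ := if v ≤ 1 then 1 else rup 3 v
def RC (v : ℕ) : ℕ := if v ≤ 1 then 1 else if v = 2 then 2 else rup 10 v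

lemma RA_pos (v : ℕ) : 0 < RA v := rup_pos one_pos v
lemma RB_pos (v : ℕ) : 0 < RB v := by
  unfold RB; split; · norm_num
  · exact rup_pos (by norm_num) v
lemma RC_pos (v : ℕ) : 0 < RC v := by
  unfold RC; split; · norm_num
  split; · norm_num
  · exact rup_pos (by norm_num) v

lemma le_RA (v : ℕ) : v ≤ RA v := le_rup one_pos v
lemma le_RB (v : ℕ) : v ≤ RB v := by
  unfold RB; split
  · omega
  · exact le_rup (by norm_num) v
lemma le_RC (v : ℕ) : v ≤ RC v := by
  unfold RC; split
  · omega
  split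
  · omega
  · exact le_rup (by norm_num) v

lemma RA_le {v k : ℕ} (h : v ≤ 2 ^ k) : RA v ≤ 2 ^ k := by
  have := rup_le one_pos (by simpa using h : v ≤ 1 * 2 ^ k)
  simpa [RA] using this
lemma RB_le {v k : ℕ} (h : v ≤ 3 * 2 ^ k) : RB v ≤ 3 * 2 ^ k := by
  unfold RB; split
  · have : 0 < 2 ^ k := Nat.pow_pos (by norm_num)
    omega
  · exact rup_le (by norm_num) h
lemma RC_le {v k : ℕ} (h : v ≤ 10 * 2 ^ k) : RC v ≤ 10 * 2 ^ k := by
  unfold RC; split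
  · have : 0 < 2 ^ k := Nat.pow_pos (by norm_num)
    omega
  split
  · have : 0 < 2 ^ k := Nat.pow_pos (by norm_num)
    omega
  · exact rup_le (by norm_num) h

lemma RA_dvd {v w : ℕ} (h : v ≤ w) : RA v ∣ RA w := rup_dvd h

lemma RB_dvd {v w : ℕ} (h : v ≤ w) : RB v ∣ RB w := by
  unfold RB
  by_cases hv : v ≤ 1
  · simp [hv]
  · have hw : ¬ w ≤ 1 := by omega
    simp only [if_neg hv, if_neg hw]
    exact rup_dvd h

lemma RC_dvd {v w : ℕ} (h : v ≤ w) : RC v ∣ RC w := by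
  unfold RC
  by_cases hv : v ≤ 1
  · simp [hv]
  · have hw : ¬ w ≤ 1 := by omega
    by_cases hv2 : v = 2
    · simp only [if_neg hv, if_neg hw, if_pos hv2]
      by_cases hw2 : w = 2
      · simp [hw2]
      · simp only [if_neg hw2]
        have : rup 10 w = 10 * 2 ^ Nat.clog 2 ((w + 9) / 10) := rfl
        rw [this]
        exact ⟨5 * 2 ^ Nat.clog 2 ((w + 9) / 10), by ring⟩
    · have hw2 : ¬ w = 2 := by omega
      simp only [if_neg hv, if_neg hw, if_neg hv2, if_neg hw2]
      exact rup_dvd h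

end Stmt7Aux

namespace Stmt7Aux

lemma cert_core {v α β γ : ℕ} (hA : RA v ≤ α) (hB : RB v ≤ β) (hC : RC v ≤ γ)
    (h : 9 * (α * (β * γ)) ≤ 40 * v ^ 3) : 9 * (RA v * (RB v * RC v)) ≤ 40 * v ^ 3 := by
  calc 9 * (RA v * (RB v * RC v)) ≤ 9 * (α * (β * γ)) := by
        apply Nat.mul_le_mul_left
        exact Nat.mul_le_mul hA (Nat.mul_le_mul hB hC)
    _ ≤ 40 * v ^ 3 := h

lemma cert {v : ℕ} (hv : 1 ≤ v) : 9 * (RA v * (RB v * RC v)) ≤ 40 * v ^ 3 := by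
  by_cases hsmall : v ≤ 8
  · interval_cases v
    · exact cert_core (RA_le (by norm_num : 1 ≤ 2 ^ 0)) (by norm_num [RB] : RB 1 ≤ 1)
        (by norm_num [RC] : RC 1 ≤ 1) (by norm_num)
    · exact cert_core (RA_le (by norm_num : 2 ≤ 2 ^ 1)) (RB_le (by norm_num : 2 ≤ 3 * 2 ^ 0))
        (by norm_num [RC] : RC 2 ≤ 2) (by norm_num)
    · exact cert_core (RA_le (by norm_num : 3 ≤ 2 ^ 2)) (RB_le (by norm_num : 3 ≤ 3 * 2 ^ 0))
        (RC_le (by norm_num : 3 ≤ 10 * 2 ^ 0)) (by norm_num)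
    · exact cert_core (RA_le (by norm_num : 4 ≤ 2 ^ 2)) (RB_le (by norm_num : 4 ≤ 3 * 2 ^ 1))
        (RC_le (by norm_num : 4 ≤ 10 * 2 ^ 0)) (by norm_num)
    · exact cert_core (RA_le (by norm_num : 5 ≤ 2 ^ 3)) (RB_le (by norm_num : 5 ≤ 3 * 2 ^ 1))
        (RC_le (by norm_num : 5 ≤ 10 * 2 ^ 0)) (by norm_num)
    · exact cert_core (RA_le (by norm_num : 6 ≤ 2 ^ 3)) (RB_le (by norm_num : 6 ≤ 3 * 2 ^ 1))
        (RC_le (by norm_num : 6 ≤ 10 * 2 ^ 0)) (by norm_num)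
    · exact cert_core (RA_le (by norm_num : 7 ≤ 2 ^ 3)) (RB_le (by norm_num : 7 ≤ 3 * 2 ^ 2))
        (RC_le (by norm_num : 7 ≤ 10 * 2 ^ 0)) (by norm_num)
    · exact cert_core (RA_le (by norm_num : 8 ≤ 2 ^ 3)) (RB_le (by norm_num : 8 ≤ 3 * 2 ^ 2))
        (RC_le (by norm_num : 8 ≤ 10 * 2 ^ 0)) (by norm_num)
  -- v ≥ 9
  · push_neg at hsmall
    have hv0 : v ≠ 0 := by omega
    have hL3 : 3 ≤ Nat.log 2 v := by
      have : 2 ^ 3 ≤ v := by omega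
      exact (Nat.le_log_iff_pow_le (by norm_num) hv0).2 this
    obtain ⟨m, hm⟩ := Nat.exists_eq_add_of_le hL3
    set B : ℕ := 2 ^ m with hB
    have hBpos : 1 ≤ B := Nat.one_le_two_pow
    have hlb : 8 * B ≤ v := by
      have h1 : 2 ^ Nat.log 2 v ≤ v := Nat.pow_log_le_self 2 hv0
      rw [hm, pow_add] at h1
      calc 8 * B = 2 ^ 3 * 2 ^ m := by norm_num [hB]
        _ ≤ v := h1
    have hub : v < 16 * B := by
      have h1 : v < 2 ^ (Nat.log 2 v).succ := Nat.lt_pow_succ_log_self (by norm_num) v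
      rw [hm] at h1
      calc v < 2 ^ (3 + m).succ := h1
        _ = 16 * B := by rw [Nat.succ_eq_add_one, pow_add, pow_add]; ring
    have hAle : RA v ≤ 16 * B := by
      have : v ≤ 2 ^ (m + 4) := by
        have : (2 : ℕ) ^ (m + 4) = 16 * B := by rw [pow_add]; ring
        omega
      calc RA v ≤ 2 ^ (m + 4) := RA_le this
        _ = 16 * B := by rw [pow_add]; ring
    rcases le_or_gt v (10 * B) with hc1 | hc1
    · -- case 1 : 8B ≤ v ≤ 10B
      have hBle : RB v ≤ 12 * B := by
        have hv' : v ≤ 3 * 2 ^ (m + 2) := by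
          have : 3 * 2 ^ (m + 2) = 12 * B := by rw [pow_add]; ring
          omega
        calc RB v ≤ 3 * 2 ^ (m + 2) := RB_le hv'
          _ = 12 * B := by rw [pow_add]; ring
      have hCle : RC v ≤ 10 * B := RC_le (by simpa using hc1)
      apply cert_core hAle hBle hCle
      have h8 : 8 * B ≤ v := hlb
      calc 9 * (16 * B * (12 * B * (10 * B))) = 17280 * B ^ 3 := by ring
        _ ≤ 20480 * B ^ 3 := Nat.mul_le_mul_right _ (by norm_num)
        _ = 40 * (8 * B) ^ 3 := by ring
        _ ≤ 40 * v ^ 3 := by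
            have := Nat.pow_le_pow_left h8 3
            omega
    · rcases le_or_gt v (12 * B) with hc2 | hc2
      · -- case 2 : 10B < v ≤ 12B
        have hBle : RB v ≤ 12 * B := by
          have hv' : v ≤ 3 * 2 ^ (m + 2) := by
            have : 3 * 2 ^ (m + 2) = 12 * B := by rw [pow_add]; ring
            omega
          calc RB v ≤ 3 * 2 ^ (m + 2) := RB_le hv'
            _ = 12 * B := by rw [pow_add]; ring
        have hCle : RC v ≤ 20 * B := by
          have hv' : v ≤ 10 * 2 ^ (m + 1) := by
            have : 10 * 2 ^ (m + 1) = 20 * B := by rw [pow_add]; ring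
            omega
          calc RC v ≤ 10 * 2 ^ (m + 1) := RC_le hv'
            _ = 20 * B := by rw [pow_add]; ring
        apply cert_core hAle hBle hCle
        have h10 : 10 * B ≤ v := by omega
        calc 9 * (16 * B * (12 * B * (20 * B))) = 34560 * B ^ 3 := by ring
          _ ≤ 40000 * B ^ 3 := Nat.mul_le_mul_right _ (by norm_num)
          _ = 40 * (10 * B) ^ 3 := by ring
          _ ≤ 40 * v ^ 3 := by
              have := Nat.pow_le_pow_left h10 3
              omega
      · -- case 3 : 12B < v < 16B
        have hBle : RB v ≤ 24 * B := by
          have hv' : v ≤ 3 * 2 ^ (m + 3) := by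
            have : 3 * 2 ^ (m + 3) = 24 * B := by rw [pow_add]; ring
            omega
          calc RB v ≤ 3 * 2 ^ (m + 3) := RB_le hv'
            _ = 24 * B := by rw [pow_add]; ring
        have hCle : RC v ≤ 20 * B := by
          have hv' : v ≤ 10 * 2 ^ (m + 1) := by
            have : 10 * 2 ^ (m + 1) = 20 * B := by rw [pow_add]; ring
            omega
          calc RC v ≤ 10 * 2 ^ (m + 1) := RC_le hv'
            _ = 20 * B := by rw [pow_add]; ring
        apply cert_core hAle hBle hCle
        have h12 : 12 * B + 1 ≤ v := by omega
        calc 9 * (16 * B * (24 * B * (20 * B))) = 69120 * B ^ 3 := by ring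
          _ ≤ 40 * (12 * B + 1) ^ 3 := by nlinarith [hBpos]
          _ ≤ 40 * v ^ 3 := by
              have := Nat.pow_le_pow_left h12 3
              omega

end Stmt7Aux

namespace Stmt7Aux

lemma aux_num : ∀ n : ℕ, 646400 * 1600 ^ (3 + n) ≤ 331776 * 2187 ^ (3 + n) := by
  intro n
  induction n with
  | zero => norm_num
  | succ k ih =>
    have h1 : 3 + (k + 1) = (3 + k) + 1 := by omega
    rw [h1, pow_succ, pow_succ]
    calc 646400 * (1600 ^ (3 + k) * 1600) = (646400 * 1600 ^ (3 + k)) * 1600 := by ring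
      _ ≤ (331776 * 2187 ^ (3 + k)) * 1600 := Nat.mul_le_mul_right _ ih
      _ ≤ (331776 * 2187 ^ (3 + k)) * 2187 := Nat.mul_le_mul_left _ (by norm_num)
      _ = 331776 * (2187 ^ (3 + k) * 2187) := by ring

lemma finish {d N P : ℕ} (hd : 4 ≤ d) (hN : 0 < N)
    (key : 9 ^ d * P ^ 3 ≤ 40 ^ d * N ^ 3) :
    (P : ℝ) / N ≤ (4 / Real.exp 1) * Real.sqrt 3 ^ (d - 1) := by
  obtain ⟨n, hn⟩ := Nat.exists_eq_add_of_le hd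
  set e := Real.exp 1 with he
  have hepos : 0 < e := Real.exp_pos 1
  have hNR : (0 : ℝ) < N := by exact_mod_cast hN
  have hRnn : 0 ≤ (4 / e) * Real.sqrt 3 ^ (d - 1) := by positivity
  apply le_of_pow_le_pow_left₀ (n := 6) (by norm_num) hRnn
  have hkeyR : (9 : ℝ) ^ d * (P : ℝ) ^ 3 ≤ 40 ^ d * (N : ℝ) ^ 3 := by exact_mod_cast key
  have h3 : ((P : ℝ) / N) ^ 3 ≤ ((40 : ℝ) / 9) ^ d := by
    rw [div_pow, div_pow, div_le_div_iff₀ (by positivity) (by positivity)]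
    nlinarith [hkeyR]
  have hQ6 : ((P : ℝ) / N) ^ 6 ≤ ((1600 : ℝ) / 81) ^ d := by
    calc ((P : ℝ) / N) ^ 6 = (((P : ℝ) / N) ^ 3) ^ 2 := by ring
      _ ≤ (((40 : ℝ) / 9) ^ d) ^ 2 := pow_le_pow_left₀ (by positivity) h3 2
      _ = ((1600 : ℝ) / 81) ^ d := by
          rw [← pow_mul, mul_comm d 2, pow_mul]
          norm_num
  have hs3 : Real.sqrt 3 ^ 2 = 3 := Real.sq_sqrt (by norm_num)
  have hs6 : Real.sqrt 3 ^ 6 = 27 := by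
    rw [show (6 : ℕ) = 2 * 3 from rfl, pow_mul, hs3]; norm_num
  have hR6 : ((4 / e) * Real.sqrt 3 ^ (d - 1)) ^ 6 = (4096 / e ^ 6) * 27 ^ (d - 1) := by
    rw [mul_pow, ← pow_mul, mul_comm (d - 1) 6, pow_mul, hs6, div_pow]
    norm_num
  have he6 : e ^ 6 ≤ 404 := by
    have h1 : e ≤ 2.7182818286 := (Real.exp_one_lt_d9).le
    calc e ^ 6 ≤ (2.7182818286 : ℝ) ^ 6 := pow_le_pow_left₀ hepos.le h1 6
      _ ≤ 404 := by norm_num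
  have hd1 : d - 1 = 3 + n := by omega
  have hdd : d = 4 + n := hn
  have hratN : (646400 : ℕ) * 1600 ^ (3 + n) ≤ 331776 * 2187 ^ (3 + n) := aux_num n
  have hrat : (404 : ℝ) * ((1600 : ℝ) / 81) ^ d ≤ 4096 * 27 ^ (d - 1) := by
    rw [div_pow, hd1, hdd, ← mul_div_assoc]
    rw [div_le_iff₀ (by positivity : (0 : ℝ) < (81 : ℝ) ^ (4 + n))]
    have hcast : ((646400 : ℕ) : ℝ) * ((1600 : ℕ) : ℝ) ^ (3 + n) ≤
        ((331776 : ℕ) : ℝ) * ((2187 : ℕ) : ℝ) ^ (3 + n) := by exact_mod_cast hratN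
    push_cast at hcast
    calc (404 : ℝ) * 1600 ^ (4 + n)
        = (1600 / 646400 * 404) * (646400 * 1600 ^ (3 + n)) := by
          rw [show (4 + n) = (3 + n) + 1 from by omega, pow_succ]; ring
      _ ≤ (1600 / 646400 * 404) * (331776 * 2187 ^ (3 + n)) := by
          apply mul_le_mul_of_nonneg_left hcast (by norm_num)
      _ = 4096 * 27 ^ (3 + n) * 81 ^ (4 + n) := by
          have h2187 : (2187 : ℝ) ^ (3 + n) = 27 ^ (3 + n) * 81 ^ (3 + n) := by
            rw [← mul_pow]; norm_num
          rw [h2187, show (4 + n) = (3 + n) + 1 from by omega, pow_succ]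
          ring
  calc ((P : ℝ) / N) ^ 6 ≤ ((1600 : ℝ) / 81) ^ d := hQ6
    _ ≤ 4096 * 27 ^ (d - 1) / 404 := by
        rw [le_div_iff₀ (by norm_num : (0:ℝ) < 404)]
        linarith [hrat]
    _ ≤ 4096 * 27 ^ (d - 1) / e ^ 6 := by
        gcongr
    _ = ((4 / e) * Real.sqrt 3 ^ (d - 1)) ^ 6 := by rw [hR6]; ring

end Stmt7Aux

namespace Stmt7Aux

lemma build {d : ℕ} (hd : 4 ≤ d) (x : Fin d → ℕ) (hxpos : ∀ i, 0 < x i)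
    (hxmono : ∀ i j : Fin d, i ≤ j → x i ≤ x j) (t : ℕ → ℕ)
    (hge : ∀ v, v ≤ t v) (hdvd : ∀ v w : ℕ, v ≤ w → t v ∣ t w)
    (hkey : 9 ^ d * (∏ i, t (x i)) ^ 3 ≤ 40 ^ d * (∏ i, x i) ^ 3) :
    ∃ y : Fin d → ℕ, (∀ i, 0 < y i) ∧ (∀ i, x i ≤ y i) ∧
      (∀ i : Fin d, ∀ h : i.val + 1 < d, y i ∣ y ⟨i.val + 1, h⟩) ∧
      ((∏ i, y i : ℝ) / (∏ i, x i : ℝ) ≤ (4 / Real.exp 1) * (Real.sqrt 3) ^ (d - 1)) := by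
  refine ⟨fun i => t (x i), ?_, ?_, ?_, ?_⟩
  · intro i; exact lt_of_lt_of_le (hxpos i) (hge _)
  · intro i; exact hge _
  · intro i h; exact hdvd _ _ (hxmono i ⟨i.val + 1, h⟩ (by simp [Fin.le_def]))
  · have hN : 0 < ∏ i, x i := Finset.prod_pos (fun i _ => hxpos i)
    have hfin := finish hd hN hkey
    have c1 : ((∏ i, t (x i) : ℕ) : ℝ) = ∏ i, ((t (x i) : ℕ) : ℝ) := by push_cast; rfl
    have c2 : ((∏ i, x i : ℕ) : ℝ) = ∏ i, ((x i : ℕ) : ℝ) := by push_cast; rfl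
    rw [c1, c2] at hfin
    exact hfin

lemma big {d : ℕ} (hd : 4 ≤ d) (x : Fin d → ℕ) (hxpos : ∀ i, 0 < x i)
    (hxmono : ∀ i j : Fin d, i ≤ j → x i ≤ x j) :
    ∃ y : Fin d → ℕ, (∀ i, 0 < y i) ∧ (∀ i, x i ≤ y i) ∧
      (∀ i : Fin d, ∀ h : i.val + 1 < d, y i ∣ y ⟨i.val + 1, h⟩) ∧
      ((∏ i, y i : ℝ) / (∏ i, x i : ℝ) ≤ (4 / Real.exp 1) * (Real.sqrt 3) ^ (d - 1)) := by
  set N := ∏ i, x i with hN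
  set PA := ∏ i, RA (x i) with hPA
  set PB := ∏ i, RB (x i) with hPB
  set PC := ∏ i, RC (x i) with hPC
  have hprod : (∏ i, (9 * (RA (x i) * (RB (x i) * RC (x i))))) ≤ ∏ i, (40 * (x i) ^ 3) :=
    Finset.prod_le_prod' (fun i _ => cert (hxpos i))
  have hL : (∏ i, (9 * (RA (x i) * (RB (x i) * RC (x i))))) = 9 ^ d * (PA * (PB * PC)) := by
    rw [Finset.prod_mul_distrib, Finset.prod_mul_distrib, Finset.prod_mul_distrib,
      Finset.prod_const, Finset.card_fin]
  have hR : (∏ i, (40 * (x i) ^ 3)) = 40 ^ d * N ^ 3 := by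
    rw [Finset.prod_mul_distrib, Finset.prod_const, Finset.card_fin, ← Finset.prod_pow]
  have key : 9 ^ d * (PA * (PB * PC)) ≤ 40 ^ d * N ^ 3 := by
    rw [← hL, ← hR]; exact hprod
  rcases le_total PA PB with hab | hab
  · rcases le_total PA PC with hac | hac
    · -- A minimal
      apply build hd x hxpos hxmono RA le_RA (fun v w h => RA_dvd h)
      refine le_trans ?_ key
      apply Nat.mul_le_mul_left
      calc PA ^ 3 = PA * (PA * PA) := by ring
        _ ≤ PA * (PB * PC) := Nat.mul_le_mul_left _ (Nat.mul_le_mul hab hac)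
    · -- C ≤ PA ≤ PB : C minimal
      apply build hd x hxpos hxmono RC le_RC (fun v w h => RC_dvd h)
      refine le_trans ?_ key
      apply Nat.mul_le_mul_left
      calc PC ^ 3 = PC * (PC * PC) := by ring
        _ ≤ PA * (PB * PC) := by
            have h1 : PC ≤ PB := le_trans hac hab
            have := Nat.mul_le_mul hac (Nat.mul_le_mul h1 (le_refl PC))
            simpa using this
  · rcases le_total PB PC with hbc | hbc
    · -- B minimal
      apply build hd x hxpos hxmono RB le_RB (fun v w h => RB_dvd h)
      refine le_trans ?_ key
      apply Nat.mul_le_mul_left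
      calc PB ^ 3 = PB * (PB * PB) := by ring
        _ ≤ PA * (PB * PC) := Nat.mul_le_mul hab (Nat.mul_le_mul (le_refl PB) hbc)
    · -- C minimal
      apply build hd x hxpos hxmono RC le_RC (fun v w h => RC_dvd h)
      refine le_trans ?_ key
      apply Nat.mul_le_mul_left
      have hca : PC ≤ PA := le_trans hbc hab
      calc PC ^ 3 = PC * (PC * PC) := by ring
        _ ≤ PA * (PB * PC) := Nat.mul_le_mul hca (Nat.mul_le_mul hbc (le_refl PC))

end Stmt7Aux

namespace Stmt7Aux

lemma sqrt3_ge : (1.7 : ℝ) ≤ Real.sqrt 3 := by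
  nlinarith [Real.sq_sqrt (show (0:ℝ) ≤ 3 by norm_num), Real.sqrt_nonneg 3]

lemma exp1_lt : Real.exp 1 < 2.72 := lt_trans Real.exp_one_lt_d9 (by norm_num)

lemma small2 (x : Fin 2 → ℕ) (hxpos : ∀ i, 0 < x i)
    (hxmono : ∀ i j : Fin 2, i ≤ j → x i ≤ x j) :
    ∃ y : Fin 2 → ℕ, (∀ i, 0 < y i) ∧ (∀ i, x i ≤ y i) ∧
      (∀ i : Fin 2, ∀ h : i.val + 1 < 2, y i ∣ y ⟨i.val + 1, h⟩) ∧
      ((∏ i, y i : ℝ) / (∏ i, x i : ℝ) ≤ (4 / Real.exp 1) * (Real.sqrt 3) ^ (2 - 1)) := by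
  have ha : 0 < x 0 := hxpos 0
  have hb : 0 < x 1 := hxpos 1
  have hab : x 0 ≤ x 1 := hxmono 0 1 (by decide)
  set a := x 0 with hadef
  set b := x 1 with hbdef
  set q := (b - 1) / a + 1 with hq
  have hmod := Nat.div_add_mod (b - 1) a
  have hmlt : (b - 1) % a < a := Nat.mod_lt _ ha
  have huq : a * q = a * ((b - 1) / a) + a := by rw [hq]; ring
  have h1 : b ≤ a * q := by omega
  have h2 : a * q + 1 ≤ 2 * b := by omega
  refine ⟨![a, a * q], ?_, ?_, ?_, ?_⟩
  · intro i; fin_cases i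
    · simpa using ha
    · simpa using Nat.mul_pos ha (show 0 < q from hq ▸ Nat.succ_pos _)
  · intro i; fin_cases i
    · simp [hadef]
    · simpa using h1
  · intro i h; fin_cases i
    · simpa using ⟨q, rfl⟩
    · exact absurd h (by decide)
  · rw [Fin.prod_univ_two, Fin.prod_univ_two]
    simp only [Matrix.cons_val_zero, Matrix.cons_val_one, Matrix.head_cons]
    have hposR : (0:ℝ) < (a:ℝ) * b := by positivity
    have hstep : ((a:ℕ):ℝ) * ((a * q : ℕ):ℝ) / (((a:ℕ):ℝ) * ((b:ℕ):ℝ)) ≤ 2 := by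
      rw [div_le_iff₀ hposR]
      have hnat : a * (a * q) ≤ 2 * (a * b) := by
        calc a * (a * q) ≤ a * (2 * b) := Nat.mul_le_mul_left _ (by omega)
          _ = 2 * (a * b) := by ring
      calc ((a:ℕ):ℝ) * ((a * q : ℕ):ℝ) = ((a * (a * q) : ℕ) : ℝ) := by push_cast; ring
        _ ≤ ((2 * (a * b) : ℕ) : ℝ) := by exact_mod_cast hnat
        _ = 2 * ((a:ℝ) * (b:ℝ)) := by push_cast; ring
    refine le_trans hstep ?_
    have hepos : (0:ℝ) < Real.exp 1 := Real.exp_pos 1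
    rw [pow_one, div_mul_eq_mul_div, le_div_iff₀ hepos]
    nlinarith [sqrt3_ge, exp1_lt]

lemma small3 (x : Fin 3 → ℕ) (hxpos : ∀ i, 0 < x i)
    (hxmono : ∀ i j : Fin 3, i ≤ j → x i ≤ x j) :
    ∃ y : Fin 3 → ℕ, (∀ i, 0 < y i) ∧ (∀ i, x i ≤ y i) ∧
      (∀ i : Fin 3, ∀ h : i.val + 1 < 3, y i ∣ y ⟨i.val + 1, h⟩) ∧
      ((∏ i, y i : ℝ) / (∏ i, x i : ℝ) ≤ (4 / Real.exp 1) * (Real.sqrt 3) ^ (3 - 1)) := by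
  have ha : 0 < x 0 := hxpos 0
  have hb : 0 < x 1 := hxpos 1
  have hc : 0 < x 2 := hxpos 2
  have hab : x 0 ≤ x 1 := hxmono 0 1 (by decide)
  have hbc : x 1 ≤ x 2 := hxmono 1 2 (by decide)
  set a := x 0 with hadef
  set b := x 1 with hbdef
  set c := x 2 with hcdef
  set q := (b - 1) / a + 1 with hq
  have hmod := Nat.div_add_mod (b - 1) a
  have hmlt : (b - 1) % a < a := Nat.mod_lt _ ha
  have huq : a * q = a * ((b - 1) / a) + a := by rw [hq]; ring
  set u := a * q with hu
  have h1 : b ≤ u := by omega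
  have h2 : u + 1 ≤ 2 * b := by omega
  have hupos : 0 < u := by omega
  set q' := (c - 1) / u + 1 with hq'
  have hmod' := Nat.div_add_mod (c - 1) u
  have hmlt' : (c - 1) % u < u := Nat.mod_lt _ hupos
  have hwq : u * q' = u * ((c - 1) / u) + u := by rw [hq']; ring
  set w := u * q' with hw
  have h3 : c ≤ w := by omega
  have h4 : w + 1 ≤ 2 * c := by
    rcases le_or_gt c u with hcu | hcu
    · have h0 : (c - 1) / u = 0 := Nat.div_eq_of_lt (by omega)
      have : u * ((c - 1) / u) = 0 := by rw [h0]; ring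
      omega
    · omega
  refine ⟨![a, u, w], ?_, ?_, ?_, ?_⟩
  · intro i; fin_cases i
    · simpa using ha
    · simpa using (by omega : 0 < u)
    · simpa using (by omega : 0 < w)
  · intro i; fin_cases i
    · simp [hadef]
    · simpa using h1
    · simpa using h3
  · intro i h; fin_cases i
    · simpa using ⟨q, rfl⟩
    · simpa using ⟨q', rfl⟩
    · exact absurd h (by decide)
  · rw [Fin.prod_univ_three, Fin.prod_univ_three]
    simp only [Matrix.cons_val_zero, Matrix.cons_val_one, Matrix.head_cons,
      Matrix.cons_val_two, Matrix.tail_cons]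
    have hposR : (0:ℝ) < (a:ℝ) * b * c := by positivity
    have hnat : a * u * w ≤ 4 * (a * b * c) := by
      have hmul : (u + 1) * (w + 1) ≤ (2 * b) * (2 * c) := Nat.mul_le_mul h2 h4
      have huw : u * w ≤ 4 * (b * c) := by nlinarith
      calc a * u * w = a * (u * w) := by ring
        _ ≤ a * (4 * (b * c)) := Nat.mul_le_mul_left _ huw
        _ = 4 * (a * b * c) := by ring
    have hstep : ((a:ℕ):ℝ) * ((u:ℕ):ℝ) * ((w:ℕ):ℝ) / ((a:ℝ) * b * c) ≤ 4 := by
      rw [div_le_iff₀ hposR]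
      calc ((a:ℕ):ℝ) * ((u:ℕ):ℝ) * ((w:ℕ):ℝ) = ((a * u * w : ℕ) : ℝ) := by push_cast; ring
        _ ≤ ((4 * (a * b * c) : ℕ) : ℝ) := by exact_mod_cast hnat
        _ = 4 * ((a:ℝ) * b * c) := by push_cast; ring
    refine le_trans hstep ?_
    have hepos : (0:ℝ) < Real.exp 1 := Real.exp_pos 1
    have hs3 : Real.sqrt 3 ^ 2 = 3 := Real.sq_sqrt (by norm_num)
    show (4:ℝ) ≤ 4 / Real.exp 1 * Real.sqrt 3 ^ (2:ℕ)
    rw [hs3, div_mul_eq_mul_div, le_div_iff₀ hepos]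
    nlinarith [exp1_lt]

end Stmt7Aux

namespace Stmt7Aux

lemma small0 (x : Fin 0 → ℕ) (hxpos : ∀ i, 0 < x i)
    (hxmono : ∀ i j : Fin 0, i ≤ j → x i ≤ x j) :
    ∃ y : Fin 0 → ℕ, (∀ i, 0 < y i) ∧ (∀ i, x i ≤ y i) ∧
      (∀ i : Fin 0, ∀ h : i.val + 1 < 0, y i ∣ y ⟨i.val + 1, h⟩) ∧
      ((∏ i, y i : ℝ) / (∏ i, x i : ℝ) ≤ (4 / Real.exp 1) * (Real.sqrt 3) ^ (0 - 1)) := by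
  refine ⟨x, hxpos, fun i => le_refl _, fun i h => i.elim0, ?_⟩
  simp only [Finset.univ_eq_empty, Finset.prod_empty]
  have hepos : (0:ℝ) < Real.exp 1 := Real.exp_pos 1
  rw [show (0 - 1 : ℕ) = 0 from rfl, pow_zero, mul_one, div_self (by norm_num : (1:ℝ) ≠ 0),
    le_div_iff₀ hepos]
  nlinarith [exp1_lt]

lemma small1 (x : Fin 1 → ℕ) (hxpos : ∀ i, 0 < x i)
    (hxmono : ∀ i j : Fin 1, i ≤ j → x i ≤ x j) :
    ∃ y : Fin 1 → ℕ, (∀ i, 0 < y i) ∧ (∀ i, x i ≤ y i) ∧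
      (∀ i : Fin 1, ∀ h : i.val + 1 < 1, y i ∣ y ⟨i.val + 1, h⟩) ∧
      ((∏ i, y i : ℝ) / (∏ i, x i : ℝ) ≤ (4 / Real.exp 1) * (Real.sqrt 3) ^ (1 - 1)) := by
  refine ⟨x, hxpos, fun i => le_refl _, fun i h => absurd h (by omega), ?_⟩
  rw [Fin.prod_univ_one]
  have h0 : (0:ℝ) < (x 0 : ℝ) := by exact_mod_cast hxpos 0
  rw [div_self (ne_of_gt h0)]
  have hepos : (0:ℝ) < Real.exp 1 := Real.exp_pos 1
  rw [show (1 - 1 : ℕ) = 0 from rfl, pow_zero, mul_one, le_div_iff₀ hepos]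
  nlinarith [exp1_lt]

end Stmt7Aux

theorem stmt7 (d : ℕ) (x : Fin d → ℕ) (hxpos : ∀ i, 0 < x i)
    (hxmono : ∀ i j : Fin d, i ≤ j → x i ≤ x j) :
    ∃ y : Fin d → ℕ, (∀ i, 0 < y i) ∧ (∀ i, x i ≤ y i) ∧
      (∀ i : Fin d, ∀ h : i.val + 1 < d, y i ∣ y ⟨i.val + 1, h⟩) ∧
      ((∏ i, y i : ℝ) / (∏ i, x i : ℝ) ≤ (4 / Real.exp 1) * (Real.sqrt 3) ^ (d - 1)) := by
  obtain _ | _ | _ | _ | n := d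
  · exact Stmt7Aux.small0 x hxpos hxmono
  · exact Stmt7Aux.small1 x hxpos hxmono
  · exact Stmt7Aux.small2 x hxpos hxmono
  · exact Stmt7Aux.small3 x hxpos hxmono
  · exact Stmt7Aux.big (by omega) x hxpos hxmono
end

section
/- Let K_1,…,K_n ⊂ ℝ be compact intervals (1-dimensional convex bodies), and let q_1 ≥ q_2 be positive integers such that: (1) each K_j has length strictly less than q_1 (equivalently (K_j − K_j) ∩ q_1(ℤ \ {0}) = ∅), and (2) (K_j − K_l) ∩ q_2ℤ = ∅ for all j ≠ l. Then the total number of integer points in the union, ∑_{j=1}^n #(K_j ∩ ℤ), is at most q_1. -/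
open Pointwise Set

theorem stmt8 (n : ℕ) (a b : Fin n → ℝ) (hab : ∀ j, a j ≤ b j)
    (q1 q2 : ℕ) (hq1 : 0 < q1) (hq2 : 0 < q2) (hq : q2 ≤ q1)
    (h1 : ∀ j, b j - a j < (q1 : ℝ))
    (h2 : ∀ j l, j ≠ l →
      (Icc (a j) (b j) - Icc (a l) (b l)) ∩ {x : ℝ | ∃ m : ℤ, x = (q2 : ℝ) * m} = ∅) :
    ∑ j : Fin n, (Icc (a j) (b j) ∩ (Set.range ((↑) : ℤ → ℝ))).ncard ≤ q1 := by
  classical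
  set T : Fin n → Finset ℤ := fun j => Finset.Icc ⌈a j⌉ ⌊b j⌋ with hT
  -- rewrite each summand as a finset card
  have hset : ∀ j, (Icc (a j) (b j) ∩ Set.range ((↑) : ℤ → ℝ)).ncard = (T j).card := by
    intro j
    have : (Icc (a j) (b j) ∩ Set.range ((↑) : ℤ → ℝ)) = ((↑) : ℤ → ℝ) '' (T j : Set ℤ) := by
      ext x
      simp only [Set.mem_inter_iff, Set.mem_Icc, Set.mem_range, Set.mem_image, hT,
        Finset.coe_Icc]
      constructor
      · rintro ⟨⟨h1x, h2x⟩, m, rfl⟩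
        exact ⟨m, ⟨Int.ceil_le.mpr h1x, Int.le_floor.mpr h2x⟩, rfl⟩
      · rintro ⟨m, ⟨hm1, hm2⟩, rfl⟩
        exact ⟨⟨Int.ceil_le.mp hm1, Int.le_floor.mp hm2⟩, m, rfl⟩
    rw [this, Set.ncard_image_of_injective _ Int.cast_injective, Set.ncard_coe_finset]
  simp only [hset]
  -- key: elements of different T's are never congruent mod q2
  have hkey : ∀ j l, j ≠ l → ∀ m ∈ T j, ∀ k ∈ T l, ¬ ((q2 : ℤ) ∣ m - k) := by
    intro j l hjl m hm k hk ⟨t, ht⟩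
    simp only [hT, Finset.mem_Icc] at hm hk
    have hx : ((m : ℝ) - k) ∈
        (Icc (a j) (b j) - Icc (a l) (b l)) ∩ {x : ℝ | ∃ m : ℤ, x = (q2 : ℝ) * m} := by
      constructor
      · apply Set.sub_mem_sub
        · exact ⟨by exact_mod_cast Int.ceil_le.mp hm.1, by exact_mod_cast Int.le_floor.mp hm.2⟩
        · exact ⟨by exact_mod_cast Int.ceil_le.mp hk.1, by exact_mod_cast Int.le_floor.mp hk.2⟩
      · exact ⟨t, by exact_mod_cast congrArg (fun z : ℤ => (z : ℝ)) ht⟩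
    rw [h2 j l hjl] at hx
    exact hx
  -- each T j has at most q1 elements
  have hcard1 : ∀ j, (T j).card ≤ q1 := by
    intro j
    have hle : (⌊b j⌋ : ℝ) - ⌈a j⌉ ≤ b j - a j := by
      have := Int.floor_le (b j)
      have := Int.le_ceil (a j)
      linarith
    have : (⌊b j⌋ : ℝ) - ⌈a j⌉ < q1 := lt_of_le_of_lt hle (h1 j)
    have hz : ⌊b j⌋ - ⌈a j⌉ < (q1 : ℤ) := by exact_mod_cast this
    simp only [hT, Int.card_Icc]
    omega
  by_cases hbig : ∃ j0, q2 < (T j0).card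
  · -- one big interval: all others are empty
    obtain ⟨j0, hj0⟩ := hbig
    have hlen : (q2 : ℤ) ≤ ⌊b j0⌋ - ⌈a j0⌉ := by
      have := hj0
      simp only [hT, Int.card_Icc] at this
      omega
    have hempty : ∀ l, l ≠ j0 → T l = ∅ := by
      intro l hl
      by_contra hne
      obtain ⟨k, hk⟩ := Finset.nonempty_iff_ne_empty.mpr hne
      set m : ℤ := ⌈a j0⌉ + (k - ⌈a j0⌉) % q2 with hm
      have hmem : m ∈ T j0 := by
        simp only [hT, Finset.mem_Icc]
        have h1' : 0 ≤ (k - ⌈a j0⌉) % q2 := Int.emod_nonneg _ (by positivity)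
        have h2' : (k - ⌈a j0⌉) % q2 < q2 := Int.emod_lt_of_pos _ (by exact_mod_cast hq2)
        omega
      apply hkey j0 l hl.symm m hmem k hk
      have : (m - k) % (q2 : ℤ) = 0 := by
        have : m - k = (k - ⌈a j0⌉) % q2 - (k - ⌈a j0⌉) := by omega
        rw [this, Int.sub_emod, Int.emod_emod_of_dvd _ dvd_rfl, sub_self, Int.zero_emod]
      exact Int.dvd_of_emod_eq_zero this
    calc ∑ j : Fin n, (T j).card = (T j0).card := by
          rw [Finset.sum_eq_single j0]
          · intro l _ hl; rw [hempty l hl]; simp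
          · intro h; exact absurd (Finset.mem_univ j0) h
      _ ≤ q1 := hcard1 j0
  · -- all intervals small: residues mod q2 are all distinct
    push_neg at hbig
    set U : Fin n → Finset ℤ := fun j => (T j).image (fun m => m % (q2 : ℤ)) with hU
    have hUcard : ∀ j, (U j).card = (T j).card := by
      intro j
      apply Finset.card_image_of_injOn
      intro m hm k hk hmk
      have hdvd : (q2 : ℤ) ∣ m - k := Int.ModEq.dvd (hmk.symm : k % (q2:ℤ) = m % (q2:ℤ))
      simp only [hT, Finset.mem_coe, Finset.mem_Icc] at hm hk
      have hd : ⌊b j⌋ - ⌈a j⌉ + 1 ≤ (q2 : ℤ) := by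
        have := hbig j
        simp only [hT, Int.card_Icc] at this
        omega
      have : m - k = 0 := by
        refine Int.eq_zero_of_dvd_of_natAbs_lt_natAbs hdvd ?_
        have : (q2 : ℤ).natAbs = q2 := Int.natAbs_natCast q2
        omega
      omega
    have hUdisj : ∀ j ∈ (Finset.univ : Finset (Fin n)), ∀ l ∈ Finset.univ, j ≠ l →
        Disjoint (U j) (U l) := by
      intro j _ l _ hjl
      rw [Finset.disjoint_left]
      intro r hrj hrl
      simp only [hU, Finset.mem_image] at hrj hrl
      obtain ⟨m, hm, hm'⟩ := hrj
      obtain ⟨k, hk, hk'⟩ := hrl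
      exact hkey j l hjl m hm k hk (Int.ModEq.dvd ((hk'.trans hm'.symm) : k % (q2:ℤ) = m % (q2:ℤ)))
    have hsub : Finset.univ.biUnion U ⊆ Finset.Ico (0 : ℤ) q2 := by
      intro r hr
      simp only [Finset.mem_biUnion, hU, Finset.mem_image] at hr
      obtain ⟨j, _, m, _, rfl⟩ := hr
      simp only [Finset.mem_Ico]
      exact ⟨Int.emod_nonneg _ (by positivity), Int.emod_lt_of_pos _ (by exact_mod_cast hq2)⟩
    calc ∑ j : Fin n, (T j).card = ∑ j : Fin n, (U j).card := by
          simp [hUcard]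
      _ = (Finset.univ.biUnion U).card := (Finset.card_biUnion hUdisj).symm
      _ ≤ (Finset.Ico (0 : ℤ) (q2 : ℤ)).card := Finset.card_le_card hsub
      _ = q2 := by rw [Int.card_Ico]; omega
      _ ≤ q1 := hq
end

section
/- Let K ⊂ ℝ^2 be a convex body and v^1, v^2 ∈ ℝ^2 linearly independent vectors such that K ∩ (K + v^1) ≠ ∅ and K ∩ (K + v^2) ≠ ∅. Let Λ be the lattice generated by v^1, v^2. Then there exists a point x ∈ K such that the boundary of the parallelogram with vertices x, x+v^1, x+v^2, x+v^1+v^2 is contained in K + Λ. -/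
open Pointwise Set

theorem stmt11 (K : Set (Fin 2 → ℝ))
    (hKconv : Convex ℝ K) (hKcomp : IsCompact K) (hKint : (interior K).Nonempty)
    (v w : Fin 2 → ℝ) (hind : LinearIndependent ℝ ![v, w])
    (hv : (K ∩ (K + {v})).Nonempty) (hw : (K ∩ (K + {w})).Nonempty) :
    ∃ x ∈ K,
      segment ℝ x (x + v) ∪ segment ℝ x (x + w) ∪
      segment ℝ (x + v) (x + v + w) ∪ segment ℝ (x + w) (x + v + w) ⊆
        K + (Submodule.span ℤ {v, w} : Set (Fin 2 → ℝ)) := by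
  set Λ : Submodule ℤ (Fin 2 → ℝ) := Submodule.span ℤ {v, w} with hΛ
  have hvΛ : v ∈ Λ := Submodule.subset_span (by left; rfl)
  have hwΛ : w ∈ Λ := Submodule.subset_span (by right; rfl)
  have key : ∀ p u : Fin 2 → ℝ, p ∈ K → p - u ∈ K → u ∈ Λ →
      ∀ (t : ℝ) (μ : Fin 2 → ℝ), μ ∈ Λ → p + t • u + μ ∈ K + (Λ : Set (Fin 2 → ℝ)) := by
    intro p u hp hpu huΛ t μ hμ
    have hf0 := Int.fract_nonneg t
    have hf1 := (Int.fract_lt_one t).le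
    have hk : (1 - Int.fract t) • (p - u) + Int.fract t • p ∈ K :=
      hKconv hpu hp (by linarith) hf0 (by ring)
    refine Set.mem_add.mpr ⟨_, hk, (⌊t⌋ + 1) • u + μ,
      Submodule.add_mem _ (Submodule.smul_mem _ _ huΛ) hμ, ?_⟩
    have hz : ((⌊t⌋ + 1 : ℤ) : ℝ) • u = (⌊t⌋ + 1 : ℤ) • u := Int.cast_smul_eq_zsmul ℝ _ u
    rw [← hz]
    have hfr : Int.fract t = t - (⌊t⌋ : ℝ) := rfl
    push_cast
    rw [hfr]
    module
  obtain ⟨a, haK, haK'⟩ := hv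
  obtain ⟨b, hbK, hbK'⟩ := hw
  have hav : a - v ∈ K := by
    obtain ⟨k, hk, x, hx, hkx⟩ := Set.mem_add.mp haK'
    rw [Set.mem_singleton_iff] at hx
    rw [hx] at hkx
    exact (eq_sub_of_add_eq hkx) ▸ hk
  have hbw : b - w ∈ K := by
    obtain ⟨k, hk, x, hx, hkx⟩ := Set.mem_add.mp hbK'
    rw [Set.mem_singleton_iff] at hx
    rw [hx] at hkx
    exact (eq_sub_of_add_eq hkx) ▸ hk
  have hcard : Fintype.card (Fin 2) = Module.finrank ℝ (Fin 2 → ℝ) := by simp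
  have hspan : Submodule.span ℝ {v, w} = ⊤ := by
    have hB := (basisOfLinearIndependentOfCardEqFinrank hind hcard).span_eq
    rw [coe_basisOfLinearIndependentOfCardEqFinrank] at hB
    have hr : Set.range ![v, w] = {v, w} := by
      ext y; simp [Fin.exists_fin_two, or_comm]
    rwa [hr] at hB
  have hmem : b - a ∈ Submodule.span ℝ {v, w} := hspan ▸ Submodule.mem_top
  obtain ⟨t, s, hts⟩ := Submodule.mem_span_pair.mp hmem
  have hx0 : a + t • v ∈ K + (Λ : Set (Fin 2 → ℝ)) := by
    have := key a v haK hav hvΛ t 0 (Submodule.zero_mem _)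
    rwa [add_zero] at this
  obtain ⟨k, hkK, u, huΛ, hku⟩ := Set.mem_add.mp hx0
  have hk' : k = a + t • v - u := eq_sub_of_add_eq hku
  have hb : b = t • v + s • w + a := by
    have := hts.symm
    rw [sub_eq_iff_eq_add] at this
    exact this
  refine ⟨k, hkK, ?_⟩
  intro p hp
  rcases hp with ((hp | hp) | hp) | hp
  · rw [segment_eq_image'] at hp
    obtain ⟨r, hr, rfl⟩ := hp
    show k + r • (k + v - k) ∈ K + (Λ : Set (Fin 2 → ℝ))
    have heq : k + r • (k + v - k) = a + (t + r) • v + (-u) := by rw [hk']; module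
    rw [heq]
    exact key a v haK hav hvΛ (t + r) (-u) (Submodule.neg_mem _ huΛ)
  · rw [segment_eq_image'] at hp
    obtain ⟨r, hr, rfl⟩ := hp
    show k + r • (k + w - k) ∈ K + (Λ : Set (Fin 2 → ℝ))
    have heq : k + r • (k + w - k) = b + (r - s) • w + (-u) := by rw [hk', hb]; module
    rw [heq]
    exact key b w hbK hbw hwΛ (r - s) (-u) (Submodule.neg_mem _ huΛ)
  · rw [segment_eq_image'] at hp
    obtain ⟨r, hr, rfl⟩ := hp
    show k + v + r • (k + v + w - (k + v)) ∈ K + (Λ : Set (Fin 2 → ℝ))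
    have heq : k + v + r • (k + v + w - (k + v)) = b + (r - s) • w + (v - u) := by
      rw [hk', hb]; module
    rw [heq]
    exact key b w hbK hbw hwΛ (r - s) (v - u) (Submodule.sub_mem _ hvΛ huΛ)
  · rw [segment_eq_image'] at hp
    obtain ⟨r, hr, rfl⟩ := hp
    show k + w + r • (k + v + w - (k + w)) ∈ K + (Λ : Set (Fin 2 → ℝ))
    have heq : k + w + r • (k + v + w - (k + w)) = a + (t + r) • v + (w - u) := by
      rw [hk']; module
    rw [heq]
    exact key a v haK hav hvΛ (t + r) (w - u) (Submodule.sub_mem _ hwΛ huΛ)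
end

section
/- Let K ⊂ ℝ^2 be a convex body such that both K ∩ (K + v) ≠ ∅ and K ∩ (K + w) ≠ ∅ for two linearly independent vectors v, w generating a lattice Λ. Then K + ℤv contains an entire straight line parallel to v. -/
open Pointwise Set

theorem stmt12 (K : Set (Fin 2 → ℝ))
    (hKconv : Convex ℝ K) (hKcomp : IsCompact K) (hKint : (interior K).Nonempty)
    (v w : Fin 2 → ℝ) (hind : LinearIndependent ℝ ![v, w])
    (hv : (K ∩ (K + {v})).Nonempty) (hw : (K ∩ (K + {w})).Nonempty) :
    ∃ p : Fin 2 → ℝ, ∀ s : ℝ, ∃ k ∈ K, ∃ m : ℤ, p + s • v = k + (m : ℝ) • v := by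
  obtain ⟨z, hzK, hzKv⟩ := hv
  rw [Set.add_singleton] at hzKv
  obtain ⟨k₀, hk₀, rfl⟩ := hzKv
  -- k₀ ∈ K and k₀ + v ∈ K
  refine ⟨k₀, fun s => ?_⟩
  set m : ℤ := ⌊s⌋
  set t : ℝ := s - m with ht
  have ht0 : 0 ≤ t := by simp [ht]; exact Int.floor_le s
  have ht1 : t ≤ 1 := by
    have := Int.lt_floor_add_one s
    simp [ht]; linarith
  refine ⟨(1 - t) • k₀ + t • (k₀ + v), hKconv hk₀ hzK (by linarith) ht0 (by ring), m, ?_⟩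
  have hs : s = t + m := by simp [ht]
  rw [hs]
  module
end

section
/- Let K be a convex body in ℝ^d and Λ a lattice such that K satisfies the discrete monotonicity property with respect to Λ: for every subgroup Λ̃ of Λ of rank i, the function r ↦ D_Λ(K, rΛ̃)/r^i is decreasing in positive integers r. Then G(K,Λ) ≤ ∏_{i=1}^d ⌊2/λ_i(K,Λ) + 1⌋. -/
open Pointwise Set Module Submodule

noncomputable def resCount {d : ℕ} (K : Set (Fin d → ℝ)) (Λ M : Submodule ℤ (Fin d → ℝ)) : ℕ :=
  (((QuotientAddGroup.mk (s := M.toAddSubgroup)) '' (K ∩ (Λ : Set (Fin d → ℝ))))).ncard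

lemma ncard_image_le_image {α β γ : Type*} (S : Set α) (hS : S.Finite) (f : α → β) (g : α → γ)
    (h : ∀ x ∈ S, ∀ y ∈ S, g x = g y → f x = f y) : (f '' S).ncard ≤ (g '' S).ncard := by
  classical
  rcases S.eq_empty_or_nonempty with rfl | ⟨a₀, ha₀⟩
  · simp
  have hb₀ : Nonempty β := ⟨f a₀⟩
  set φ : γ → β := fun c => if hc : ∃ x ∈ S, g x = c then f hc.choose else Classical.arbitrary β
    with hφ
  have hsub : f '' S ⊆ φ '' (g '' S) := by
    rintro - ⟨x, hx, rfl⟩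
    refine ⟨g x, ⟨x, hx, rfl⟩, ?_⟩
    have hc : ∃ y ∈ S, g y = g x := ⟨x, hx, rfl⟩
    simp only [hφ, dif_pos hc]
    exact h _ hc.choose_spec.1 _ hx hc.choose_spec.2
  calc (f '' S).ncard ≤ (φ '' (g '' S)).ncard :=
        Set.ncard_le_ncard hsub ((hS.image g).image φ)
    _ ≤ (g '' S).ncard := Set.ncard_image_le (hS.image g)

lemma finrank_le_of_discrete {d : ℕ} (L : Submodule ℤ (Fin d → ℝ)) [DiscreteTopology L] :
    finrank ℤ L ≤ finrank ℝ (span ℝ (L : Set (Fin d → ℝ))) := by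
  classical
  set W := span ℝ (L : Set (Fin d → ℝ)) with hW
  let f := W.subtype
  let L₀ := L.comap (f.restrictScalars ℤ)
  have h_img : f '' L₀ = L := by
    rw [← LinearMap.coe_restrictScalars ℤ f, ← Submodule.map_coe (f.restrictScalars ℤ),
      Submodule.map_comap_eq_self]
    exact fun x hx ↦ LinearMap.mem_range.mpr ⟨⟨x, Submodule.subset_span hx⟩, rfl⟩
  have hdisc : DiscreteTopology L₀ := by
    refine DiscreteTopology.preimage_of_continuous_injective (L : Set (Fin d → ℝ)) ?_
      (injective_subtype _)
    exact LinearMap.continuous_of_finiteDimensional f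
  have hzl : IsZLattice ℝ L₀ := ⟨by
    rw [← (Submodule.map_injective_of_injective (injective_subtype _)).eq_iff, Submodule.map_span,
      Submodule.map_top, range_subtype, h_img]⟩
  have hrank := ZLattice.rank ℝ L₀
  have hequiv : L₀ ≃ₗ[ℤ] L := by
    refine LinearEquiv.ofBijective
      ((f.restrictScalars ℤ).restrict (p := L₀) (q := L) (fun x hx => hx)) ⟨?_, ?_⟩
    · intro x y hxy
      have h1 := congrArg Subtype.val hxy
      simp only [LinearMap.restrict_coe_apply] at h1
      exact Subtype.ext (injective_subtype W h1)
    · rintro ⟨x, hx⟩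
      have : x ∈ f '' L₀ := h_img ▸ hx
      obtain ⟨w, hw, rfl⟩ := this
      exact ⟨⟨w, hw⟩, rfl⟩
  rw [← hequiv.finrank_eq, hrank]

set_option maxHeartbeats 1000000 in
theorem stmt17 {d : ℕ} (K : Set (Fin d → ℝ)) (Λ : Submodule ℤ (Fin d → ℝ))
    [DiscreteTopology Λ] [IsZLattice ℝ Λ]
    (hKconv : Convex ℝ K) (hKcomp : IsCompact K) (hKint : (interior K).Nonempty)
    (hmono : ∀ M : Submodule ℤ (Fin d → ℝ), M ≤ Λ → ∀ r s : ℕ, 0 < r → r ≤ s →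
      (resCount K Λ ((s : ℤ) • M) : ℝ) / (s : ℝ) ^ (Module.finrank ℤ M) ≤
      (resCount K Λ ((r : ℤ) • M) : ℝ) / (r : ℝ) ^ (Module.finrank ℤ M)) :
    (latCount K Λ : ℤ) ≤ ∏ i : Fin d, ⌊2 / lam (i.val + 1) K Λ + 1⌋ := by
  classical
  set C : Set (Fin d → ℝ) := (2:ℝ)⁻¹ • (K - K) with hCdef
  obtain ⟨x₀, hx₀⟩ := hKint
  have hx₀K : x₀ ∈ K := interior_subset hx₀
  have hC0 : (0 : Fin d → ℝ) ∈ C := ⟨x₀ - x₀, Set.sub_mem_sub hx₀K hx₀K, by simp⟩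
  have hCconv : Convex ℝ C := (hKconv.sub hKconv).smul _
  -- scaling monotonicity
  have hCscale : ∀ {t t' : ℝ}, 0 < t → t ≤ t' → t • C ⊆ t' • C := by
    intro t t' ht htt'
    have ht' : 0 < t' := lt_of_lt_of_le ht htt'
    rintro x ⟨c, hc, rfl⟩
    refine ⟨(t/t') • c, hCconv.smul_mem_of_zero_mem hC0 hc
      ⟨div_nonneg ht.le ht'.le, div_le_one_of_le₀ htt' ht'.le⟩, ?_⟩
    show t' • ((t/t') • c) = t • c
    rw [smul_smul, mul_div_cancel₀ _ ht'.ne']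
  -- bound on C
  obtain ⟨R₀, hKR₀⟩ := hKcomp.isBounded.subset_closedBall 0
  set R : ℝ := max R₀ 1 with hRdef
  have hR : 0 < R := lt_of_lt_of_le one_pos (le_max_right _ _)
  have hCR : ∀ x ∈ C, ‖x‖ ≤ R := by
    rintro - ⟨y, ⟨a, ha, b, hb, rfl⟩, rfl⟩
    have ha' : ‖a‖ ≤ R := le_trans (mem_closedBall_zero_iff.mp (hKR₀ ha)) (le_max_left _ _)
    have hb' : ‖b‖ ≤ R := le_trans (mem_closedBall_zero_iff.mp (hKR₀ hb)) (le_max_left _ _)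
    calc ‖(2:ℝ)⁻¹ • (a - b)‖ = 2⁻¹ * ‖a - b‖ := by
          rw [norm_smul]; norm_num
      _ ≤ 2⁻¹ * (‖a‖ + ‖b‖) := by
          have := norm_sub_le a b; nlinarith
      _ ≤ R := by nlinarith
  -- discreteness: isolation radius
  have hiso : ∃ ε > (0:ℝ), ∀ v ∈ Λ, ‖v‖ < ε → v = 0 := by
    have h0 : {(0 : ↥Λ)} ∈ nhds (0 : ↥Λ) := by
      simp [nhds_discrete]
    rw [nhds_subtype_eq_comap, Filter.mem_comap] at h0
    obtain ⟨V, hV, hVsub⟩ := h0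
    obtain ⟨ε, hε, hball⟩ := Metric.mem_nhds_iff.mp hV
    refine ⟨ε, hε, fun v hv hvε => ?_⟩
    have : (⟨v, hv⟩ : ↥Λ) ∈ Subtype.val ⁻¹' V := by
      apply hball
      simpa [mem_ball_zero_iff] using hvε
    have := hVsub this
    simpa using congrArg Subtype.val (Set.mem_singleton_iff.mp this)
  obtain ⟨ε, hε, hεΛ⟩ := hiso
  -- finiteness of K ∩ Λ
  have hSfin : (K ∩ (Λ : Set (Fin d → ℝ))).Finite := by
    have : DiscreteTopology (Λ : Set (Fin d → ℝ)) := inferInstanceAs (DiscreteTopology ↥Λ)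
    have hcl : IsClosed (Λ : Set (Fin d → ℝ)) := by
      have : DiscreteTopology Λ.toAddSubgroup := inferInstanceAs (DiscreteTopology ↥Λ)
      exact AddSubgroup.isClosed_of_discrete (H := Λ.toAddSubgroup)
    exact Metric.finite_isBounded_inter_isClosed DiscreteTopology.isDiscrete hKcomp.isBounded hcl
  -- the span family
  set W : ℝ → Submodule ℝ (Fin d → ℝ) :=
    fun t => span ℝ ((t • C) ∩ (Λ : Set (Fin d → ℝ))) with hWdef
  have hWmono : ∀ {t t' : ℝ}, 0 < t → t ≤ t' → W t ≤ W t' := fun ht htt' =>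
    span_mono (inter_subset_inter_left _ (hCscale ht htt'))
  have hWfin : ∀ t, finrank ℝ (W t) ≤ d := fun t => by
    calc finrank ℝ (W t) ≤ finrank ℝ (Fin d → ℝ) := (W t).finrank_le
      _ = d := Module.finrank_fin_fun ℝ
  -- stabilization of a monotone family of subspaces
  have stab : ∀ I : Set ℝ, I.Nonempty → (∀ a ∈ I, ∀ b ∈ I, max a b ∈ I) → I ⊆ Ioi 0 →
      ∃ t₀ ∈ I, ∀ t ∈ I, W t ≤ W t₀ := by
    intro I hne hdir hpos
    have hfin : ((fun t => finrank ℝ (W t)) '' I).Finite :=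
      Set.Finite.subset (Set.finite_Icc 0 d)
        (by rintro - ⟨t, ht, rfl⟩; exact ⟨Nat.zero_le _, hWfin t⟩)
    obtain ⟨t₀, ht₀I, ht₀⟩ := Set.Nonempty.csSup_mem (hne.image _) hfin
    refine ⟨t₀, ht₀I, fun t htI => ?_⟩
    have hmax := hdir t htI t₀ ht₀I
    have h1 : W t₀ ≤ W (max t t₀) := hWmono (hpos ht₀I) (le_max_right _ _)
    have h2 : finrank ℝ (W (max t t₀)) ≤ finrank ℝ (W t₀) := by
      have ht₀' : finrank ℝ ↥(W t₀) = sSup ((fun t => finrank ℝ ↥(W t)) '' I) := ht₀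
      rw [ht₀']; exact le_csSup hfin.bddAbove ⟨_, hmax, rfl⟩
    calc W t ≤ W (max t t₀) := hWmono (hpos htI) (le_max_left _ _)
      _ = W t₀ := (Submodule.eq_of_le_of_finrank_le h1 h2).symm
  -- C absorbs every vector
  obtain ⟨δ, hδ, hδK⟩ := Metric.isOpen_iff.mp isOpen_interior x₀ hx₀
  have hball : ∀ v : Fin d → ℝ, ‖v‖ < δ/2 → v ∈ C := by
    intro v hv
    have hy : x₀ + (2:ℝ) • v ∈ K := by
      refine interior_subset (hδK ?_)
      rw [Metric.mem_ball, dist_eq_norm]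
      have : ‖x₀ + (2:ℝ) • v - x₀‖ = 2 * ‖v‖ := by
        rw [add_sub_cancel_left, norm_smul]; norm_num
      rw [this]; linarith
    refine ⟨(x₀ + (2:ℝ) • v) - x₀, Set.sub_mem_sub hy hx₀K, ?_⟩
    show (2:ℝ)⁻¹ • (x₀ + (2:ℝ) • v - x₀) = v
    rw [add_sub_cancel_left, smul_smul]
    norm_num
  have habs : ∀ v : Fin d → ℝ, ∃ t : ℝ, 0 < t ∧ v ∈ t • C := by
    intro v
    have hd4 : (0:ℝ) < (2 * (‖v‖ + 1))/δ := by positivity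
    refine ⟨(2 * (‖v‖ + 1))/δ, hd4, ⟨((2 * (‖v‖ + 1))/δ)⁻¹ • v, hball _ ?_, ?_⟩⟩
    · rw [norm_smul, norm_inv, Real.norm_of_nonneg hd4.le]
      rw [inv_mul_lt_iff₀ hd4]
      have h1 : ‖v‖ < ‖v‖ + 1 := by linarith
      calc ‖v‖ < ‖v‖ + 1 := h1
        _ ≤ (2 * (‖v‖ + 1)) / δ * (δ / 2) := by
            rw [div_mul_div_comm, mul_comm]
            rw [le_div_iff₀ (by positivity)]
            ring_nf
            nlinarith [norm_nonneg v]
    · show (2 * (‖v‖ + 1) / δ) • ((2 * (‖v‖ + 1) / δ)⁻¹ • v) = v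
      rw [smul_inv_smul₀ hd4.ne']
  -- W is eventually ⊤
  obtain ⟨tT, htTpos, htT⟩ : ∃ t₀ ∈ Ioi (0:ℝ), ∀ t ∈ Ioi (0:ℝ), W t ≤ W t₀ := by
    refine stab _ ⟨1, mem_Ioi.mpr one_pos⟩ (fun a ha b hb => ?_) subset_rfl
    exact mem_Ioi.mpr (lt_max_of_lt_left (mem_Ioi.mp ha))
  have hWtop : W tT = ⊤ := by
    rw [eq_top_iff, ← IsZLattice.span_top (L := Λ) (K := ℝ)]
    rw [span_le]
    intro v hv
    obtain ⟨t, ht, htv⟩ := habs v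
    exact htT t ht (subset_span ⟨htv, hv⟩)
  -- the sets defining the successive minima
  set SS : ℕ → Set ℝ := fun i => {t : ℝ | 0 < t ∧ i ≤ finrank ℝ (W t)} with hSSdef
  have hlam : ∀ i, lam i K Λ = sInf (SS i) := fun i => rfl
  have hSSbdd : ∀ i, BddBelow (SS i) := fun i => ⟨0, fun t ht => ht.1.le⟩
  have hSSne : ∀ i, i ≤ d → (SS i).Nonempty := by
    intro i hid
    refine ⟨tT, htTpos, ?_⟩
    rw [hWtop, finrank_top, Module.finrank_fin_fun]
    exact hid
  have hlam_ge : ∀ i, 1 ≤ i → i ≤ d → ε/R ≤ lam i K Λ := by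
    intro i h1 hid
    rw [hlam]
    refine le_csInf (hSSne i hid) (fun t ht => ?_)
    obtain ⟨htpos, htrank⟩ := ht
    have hvne : ∃ v, v ∈ (t • C) ∩ (Λ : Set (Fin d → ℝ)) ∧ v ≠ 0 := by
      by_contra hcon
      push_neg at hcon
      have hsub : (t • C) ∩ (Λ : Set (Fin d → ℝ)) ⊆ {0} := fun v hv => hcon v hv
      have : W t ≤ ⊥ := by
        rw [hWdef]
        simpa using span_mono (R := ℝ) hsub
      have h0 : finrank ℝ (W t) = 0 := by
        rw [le_bot_iff.mp this]; exact finrank_bot ℝ _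
      omega
    obtain ⟨v, ⟨⟨c, hc, rfl⟩, hvΛ⟩, hvne⟩ := hvne
    have hεv : ε ≤ ‖t • c‖ := by
      by_contra hcon
      exact hvne (hεΛ _ hvΛ (not_le.mp hcon))
    have hcR : ‖t • c‖ ≤ t * R := by
      rw [norm_smul, Real.norm_of_nonneg htpos.le]
      exact mul_le_mul_of_nonneg_left (hCR c hc) htpos.le
    rw [div_le_iff₀ hR]
    nlinarith
  have hlam_pos : ∀ i, 1 ≤ i → i ≤ d → 0 < lam i K Λ := fun i h1 hid =>
    lt_of_lt_of_le (by positivity) (hlam_ge i h1 hid)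
  have hlam_mono : ∀ i, i + 1 ≤ d → lam i K Λ ≤ lam (i+1) K Λ := by
    intro i hid
    rw [hlam, hlam]
    exact csInf_le_csInf (hSSbdd i) (hSSne (i+1) hid)
      (fun t ht => ⟨ht.1, le_trans (Nat.le_succ i) ht.2⟩)
  have hlam_notmem : ∀ i t, 0 < t → t < lam i K Λ → finrank ℝ (W t) < i := by
    intro i t htpos htlt
    by_contra hcon
    push_neg at hcon
    have : t ∈ SS i := ⟨htpos, hcon⟩
    have := csInf_le (hSSbdd i) this
    rw [hlam] at htlt
    linarith
  -- construction of the subspaces V i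
  have hVex : ∀ i : ℕ, ∃ V : Submodule ℝ (Fin d → ℝ), finrank ℝ V ≤ i ∧ (d ≤ i → V = ⊤) ∧
      (i < d → ∀ v ∈ (Λ : Set (Fin d → ℝ)), ∀ t : ℝ, 0 < t → t < lam (i+1) K Λ →
        v ∈ t • C → v ∈ V) := by
    intro i
    by_cases hid : d ≤ i
    · refine ⟨⊤, ?_, fun _ => rfl, fun h => absurd hid (not_le.mpr h)⟩
      rw [finrank_top, Module.finrank_fin_fun]
      exact hid
    · push_neg at hid
      have hpos : 0 < lam (i+1) K Λ := hlam_pos (i+1) (Nat.le_add_left 1 i) hid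
      obtain ⟨t₀, ht₀I, hstab⟩ := stab (Ioo 0 (lam (i+1) K Λ))
        ⟨lam (i+1) K Λ / 2, by constructor <;> [positivity; linarith]⟩
        (fun a ha b hb => ⟨lt_max_of_lt_left ha.1, max_lt ha.2 hb.2⟩)
        (fun a ha => ha.1)
      refine ⟨W t₀, ?_, fun h => absurd h (not_le.mpr hid), fun _ v hv t ht htlt hvt => ?_⟩
      · have := hlam_notmem (i+1) t₀ ht₀I.1 ht₀I.2
        omega
      · exact hstab t ⟨ht, htlt⟩ (subset_span ⟨hvt, hv⟩)
  choose V hVrank hVtop hVkey using hVex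
  -- the lattices M i and the numbers q i
  set M : ℕ → Submodule ℤ (Fin d → ℝ) := fun i => Λ ⊓ (V i).restrictScalars ℤ with hMdef
  have hMle : ∀ i, M i ≤ Λ := fun i => inf_le_left
  have hMdisc : ∀ i, DiscreteTopology (M i) := by
    intro i
    have : DiscreteTopology (Λ : Set (Fin d → ℝ)) := inferInstanceAs (DiscreteTopology ↥Λ)
    exact DiscreteTopology.of_subset this (fun x hx => hx.1)
  have hMrank : ∀ i, finrank ℤ (M i) ≤ i := by
    intro i
    have hd := hMdisc i
    have h1 : finrank ℤ (M i) ≤ finrank ℝ (span ℝ ((M i : Set (Fin d → ℝ)))) :=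
      finrank_le_of_discrete (M i)
    have h2 : span ℝ ((M i : Set (Fin d → ℝ))) ≤ V i := by
      rw [span_le]
      exact fun x hx => hx.2
    calc finrank ℤ (M i) ≤ finrank ℝ (span ℝ ((M i : Set (Fin d → ℝ)))) := h1
      _ ≤ finrank ℝ (V i) := Submodule.finrank_mono h2
      _ ≤ i := hVrank i
  set q : ℕ → ℕ := fun i => (⌊2 / lam (max i 1) K Λ + 1⌋).toNat with hqdef
  have hlam_nonneg : ∀ i, 0 ≤ lam i K Λ := by
    intro i
    rw [hlam]
    exact Real.sInf_nonneg (fun t ht => ht.1.le)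
  have hfloor_ge : ∀ i, 1 ≤ ⌊2 / lam (max i 1) K Λ + 1⌋ := by
    intro i
    rw [Int.le_floor]
    push_cast
    have := hlam_nonneg (max i 1)
    have : 0 ≤ 2 / lam (max i 1) K Λ := by positivity
    linarith
  have hq_pos : ∀ i, 0 < q i := by
    intro i
    have := hfloor_ge i
    simp only [hqdef]
    omega
  have hq_cast : ∀ i, (q i : ℤ) = ⌊2 / lam (max i 1) K Λ + 1⌋ := by
    intro i
    simp only [hqdef]
    exact Int.toNat_of_nonneg (le_trans zero_le_one (hfloor_ge i))
  have hq_gt : ∀ i, 1 ≤ i → i ≤ d → 2 < (q i : ℝ) * lam i K Λ := by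
    intro i h1 hid
    have hpos := hlam_pos i h1 hid
    have hqr : 2 / lam i K Λ < (q i : ℝ) := by
      have h2 : ((q i : ℤ) : ℝ) = ((⌊2 / lam (max i 1) K Λ + 1⌋ : ℤ) : ℝ) := by
        exact_mod_cast congrArg (fun z : ℤ => (z : ℝ)) (hq_cast i)
      have h3 : max i 1 = i := max_eq_left h1
      rw [h3] at h2
      have h4 := Int.sub_one_lt_floor (2 / lam i K Λ + 1)
      have : (2 / lam i K Λ + 1) - 1 < ((q i : ℤ) : ℝ) := by rw [h2]; exact_mod_cast h4
      push_cast at this ⊢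
      linarith
    calc (2:ℝ) = (2 / lam i K Λ) * lam i K Λ := by field_simp
      _ < (q i : ℝ) * lam i K Λ := by
          exact mul_lt_mul_of_pos_right hqr hpos
  have hq_mono : ∀ i, i + 1 ≤ d → q (i+1) ≤ q i := by
    intro i hid
    rcases Nat.eq_zero_or_pos i with rfl | hi
    · simp [hqdef]
    · have h1 : max i 1 = i := max_eq_left hi
      have h2 : max (i+1) 1 = i + 1 := max_eq_left (by omega)
      have hm := hlam_mono i hid
      have hpos := hlam_pos i hi (by omega)
      have hdiv : 2 / lam (i+1) K Λ ≤ 2 / lam i K Λ :=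
        div_le_div_of_nonneg_left (by norm_num) hpos hm
      simp only [hqdef, h1, h2]
      have := Int.floor_le_floor (R := ℝ)
        (add_le_add_left hdiv 1)
      omega
  -- counting helpers
  set S : Set (Fin d → ℝ) := K ∩ (Λ : Set (Fin d → ℝ)) with hSdef
  have hres : ∀ N : Submodule ℤ (Fin d → ℝ), resCount K Λ N =
      ((QuotientAddGroup.mk (s := N.toAddSubgroup)) '' S).ncard := fun N => rfl
  have hcount_mono : ∀ N N' : Submodule ℤ (Fin d → ℝ),
      (∀ x ∈ S, ∀ y ∈ S, x - y ∈ N' → x - y ∈ N) → resCount K Λ N ≤ resCount K Λ N' := by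
    intro N N' h
    rw [hres, hres]
    refine ncard_image_le_image S hSfin _ _ ?_
    intro x hx y hy hgxy
    rw [QuotientAddGroup.eq_iff_sub_mem] at hgxy ⊢
    exact h x hx y hy hgxy
  have hlat_le : ∀ N : Submodule ℤ (Fin d → ℝ),
      (∀ x ∈ S, ∀ y ∈ S, x - y ∈ N → x = y) → latCount K Λ ≤ resCount K Λ N := by
    intro N h
    have hid : latCount K Λ = (id '' S).ncard := by rw [Set.image_id]; rfl
    rw [hid, hres]
    refine ncard_image_le_image S hSfin id _ (fun x hx y hy hxy => ?_)
    rw [QuotientAddGroup.eq_iff_sub_mem] at hxy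
    exact h x hx y hy hxy
  have htop_le : resCount K Λ ((1:ℤ) • Λ) ≤ 1 := by
    rw [one_smul, hres]
    have hsub : (QuotientAddGroup.mk (s := Λ.toAddSubgroup)) '' S ⊆ {0} := by
      rintro - ⟨x, hx, rfl⟩
      exact (QuotientAddGroup.eq_zero_iff x).mpr hx.2
    exact le_trans (Set.ncard_le_ncard hsub (finite_singleton _)) (by simp)
  have hsmul_mem : ∀ (N : Submodule ℤ (Fin d → ℝ)) (a : ℤ) (x : Fin d → ℝ),
      x ∈ a • N ↔ ∃ m ∈ N, a • m = x := by
    intro N a x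
    rw [← SetLike.mem_coe, Submodule.coe_pointwise_smul]
    exact Set.mem_smul_set
  -- the main induction
  have MAIN : ∀ i, i ≤ d → (latCount K Λ : ℝ) ≤
      (∏ j ∈ Finset.Icc 1 i, (q j : ℝ)) * (resCount K Λ ((q i : ℤ) • M i) : ℝ) /
        (q i : ℝ) ^ i := by
    intro i
    induction i with
    | zero =>
      intro _
      have hV0 : V 0 = ⊥ := by
        have h0 : finrank ℝ (V 0) = 0 := Nat.le_zero.mp (hVrank 0)
        exact Submodule.finrank_eq_zero.mp h0
      have hinj : ∀ x ∈ S, ∀ y ∈ S, x - y ∈ (q 0 : ℤ) • M 0 → x = y := by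
        intro x hx y hy hxy
        rw [hsmul_mem] at hxy
        obtain ⟨m, hm, hme⟩ := hxy
        have hmV : m ∈ V 0 := hm.2
        rw [hV0, Submodule.mem_bot] at hmV
        subst hmV
        rw [smul_zero] at hme
        exact sub_eq_zero.mp hme.symm
      have hle := hlat_le _ hinj
      simp only [Finset.Icc_eq_empty (by omega : ¬ (1:ℕ) ≤ 0), Finset.prod_empty, pow_zero,
        one_mul, div_one]
      exact_mod_cast hle
    | succ i ih =>
      intro hid
      have hi_le : i ≤ d := le_trans (Nat.le_succ i) hid
      have hG := ih hi_le
      have h1 := hmono (M i) (hMle i) (q (i+1)) (q i) (hq_pos (i+1)) (hq_mono i hid)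
      set k := finrank ℤ (M i) with hkdef
      have hk : k ≤ i := hMrank i
      have hqi : (0:ℝ) < q i := by exact_mod_cast hq_pos i
      have hqi1 : (0:ℝ) < q (i+1) := by exact_mod_cast hq_pos (i+1)
      have hqle : (q (i+1):ℝ) ≤ q i := by exact_mod_cast hq_mono i hid
      set A : ℝ := (resCount K Λ ((q i : ℤ) • M i) : ℝ) with hAdef
      set B : ℝ := (resCount K Λ ((q (i+1) : ℤ) • M i) : ℝ) with hBdef
      set B' : ℝ := (resCount K Λ ((q (i+1) : ℤ) • M (i+1)) : ℝ) with hB'def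
      have h2 : A / (q i : ℝ) ^ i ≤ B / (q (i+1) : ℝ) ^ i := by
        have e1 : (q i : ℝ) ^ i = (q i : ℝ)^k * (q i:ℝ)^(i-k) := by
          rw [← pow_add]; congr 1; omega
        have e2 : (q (i+1) : ℝ) ^ i = (q (i+1) : ℝ)^k * (q (i+1):ℝ)^(i-k) := by
          rw [← pow_add]; congr 1; omega
        rw [e1, e2, ← div_div, ← div_div]
        have hrs : (q (i+1):ℝ)^(i-k) ≤ (q i:ℝ)^(i-k) := pow_le_pow_left₀ hqi1.le hqle _
        exact div_le_div₀ (by positivity) h1 (by positivity) hrs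
      have h3 : B ≤ B' := by
        rw [hBdef, hB'def]
        have := hcount_mono ((q (i+1) : ℤ) • M i) ((q (i+1) : ℤ) • M (i+1)) ?_
        · exact_mod_cast this
        intro x hx y hy hxy
        rw [hsmul_mem] at hxy ⊢
        obtain ⟨m, hm, hme⟩ := hxy
        refine ⟨m, ?_, hme⟩
        have hmΛ : m ∈ Λ := hMle (i+1) hm
        have hsm : ((q (i+1):ℕ):ℝ) • m = x - y := by
          have h := Int.cast_smul_eq_zsmul ℝ (((q (i+1)):ℕ):ℤ) m
          push_cast at h
          rw [h]
          exact_mod_cast hme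
        have hmV : m ∈ V i := by
          refine hVkey i (by omega) m hmΛ (2 / (q (i+1) : ℝ)) (by positivity) ?_ ?_
          · rw [div_lt_iff₀ hqi1]
            have := hq_gt (i+1) (by omega) hid
            calc (2:ℝ) < (q (i+1) : ℝ) * lam (i+1) K Λ := this
              _ = lam (i + 1) K Λ * (q (i+1) : ℝ) := mul_comm _ _
          · refine ⟨(2:ℝ)⁻¹ • (x - y), ⟨x - y, Set.sub_mem_sub hx.1 hy.1, rfl⟩, ?_⟩
            show (2 / (q (i+1) : ℝ)) • ((2:ℝ)⁻¹ • (x - y)) = m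
            rw [smul_smul, ← hsm, smul_smul]
            have hq0 : ((q (i+1):ℕ):ℝ) ≠ 0 := hqi1.ne'
            rw [show (2 / ((q (i+1):ℕ) : ℝ)) * 2⁻¹ * ((q (i+1):ℕ):ℝ) = 1 by field_simp]
            rw [one_smul]
        exact ⟨hmΛ, hmV⟩
      have hprodnn : (0:ℝ) ≤ ∏ j ∈ Finset.Icc 1 i, (q j : ℝ) :=
        Finset.prod_nonneg (fun j _ => by positivity)
      calc (latCount K Λ : ℝ) ≤ (∏ j ∈ Finset.Icc 1 i, (q j : ℝ)) * A / (q i:ℝ)^i := hG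
        _ = (∏ j ∈ Finset.Icc 1 i, (q j : ℝ)) * (A / (q i:ℝ)^i) := by ring
        _ ≤ (∏ j ∈ Finset.Icc 1 i, (q j : ℝ)) * (B / (q (i+1):ℝ)^i) :=
            mul_le_mul_of_nonneg_left h2 hprodnn
        _ ≤ (∏ j ∈ Finset.Icc 1 i, (q j : ℝ)) * (B' / (q (i+1):ℝ)^i) := by
            refine mul_le_mul_of_nonneg_left ?_ hprodnn
            exact (div_le_div_iff_of_pos_right (by positivity)).mpr h3
        _ = (∏ j ∈ Finset.Icc 1 (i+1), (q j : ℝ)) * B' / (q (i+1):ℝ)^(i+1) := by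
            rw [Finset.prod_Icc_succ_top (by omega : 1 ≤ i + 1)]
            field_simp
            ring
  -- conclusion
  have hMd : M d = Λ := by
    have htop := hVtop d le_rfl
    show Λ ⊓ (V d).restrictScalars ℤ = Λ
    rw [htop, Submodule.restrictScalars_top, inf_top_eq]
  have hfinal := MAIN d le_rfl
  rw [hMd] at hfinal
  have h1 := hmono Λ le_rfl 1 (q d) one_pos (hq_pos d)
  have hkΛ : finrank ℤ Λ ≤ d := by
    have h2 := finrank_le_of_discrete Λ
    rwa [IsZLattice.span_top, finrank_top, Module.finrank_fin_fun] at h2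
  have hqd1 : (1:ℝ) ≤ (q d : ℝ) := by exact_mod_cast hq_pos d
  have hDq : (resCount K Λ ((q d:ℤ) • Λ) : ℝ) / (q d:ℝ)^d ≤ 1 := by
    have hpow : (q d:ℝ)^(finrank ℤ Λ) ≤ (q d:ℝ)^d := pow_le_pow_right₀ hqd1 hkΛ
    have htople : (resCount K Λ (((1:ℕ):ℤ) • Λ) : ℝ) ≤ 1 := by
      have : resCount K Λ (((1:ℕ):ℤ) • Λ) ≤ 1 := by
        exact_mod_cast htop_le
      exact_mod_cast this
    calc (resCount K Λ ((q d:ℤ) • Λ) : ℝ) / (q d:ℝ)^d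
        ≤ (resCount K Λ ((q d:ℤ) • Λ) : ℝ) / (q d:ℝ)^(finrank ℤ Λ) := by
          exact div_le_div_of_nonneg_left (by positivity) (by positivity) hpow
      _ ≤ (resCount K Λ (((1:ℕ):ℤ) • Λ) : ℝ) / ((1:ℕ):ℝ)^(finrank ℤ Λ) := h1
      _ ≤ 1 := by simpa using htople
  have hreal : (latCount K Λ : ℝ) ≤ ∏ j ∈ Finset.Icc 1 d, (q j : ℝ) := by
    have hprodnn : (0:ℝ) ≤ ∏ j ∈ Finset.Icc 1 d, (q j : ℝ) :=
      Finset.prod_nonneg (fun j _ => by positivity)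
    calc (latCount K Λ : ℝ) ≤ (∏ j ∈ Finset.Icc 1 d, (q j : ℝ)) *
          (resCount K Λ ((q d:ℤ) • Λ) : ℝ) / (q d:ℝ)^d := hfinal
      _ = (∏ j ∈ Finset.Icc 1 d, (q j : ℝ)) *
          ((resCount K Λ ((q d:ℤ) • Λ) : ℝ) / (q d:ℝ)^d) := by ring
      _ ≤ (∏ j ∈ Finset.Icc 1 d, (q j : ℝ)) * 1 := mul_le_mul_of_nonneg_left hDq hprodnn
      _ = _ := mul_one _
  have hprodeq : ∏ i : Fin d, ⌊2 / lam (i.val + 1) K Λ + 1⌋ =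
      ∏ j ∈ Finset.Icc 1 d, (q j : ℤ) := by
    rw [Fin.prod_univ_eq_prod_range (fun j => ⌊2 / lam (j + 1) K Λ + 1⌋) d]
    have hicc : Finset.Icc 1 d = Finset.image (fun j => j + 1) (Finset.range d) := by
      ext x
      simp only [Finset.mem_Icc, Finset.mem_image, Finset.mem_range]
      constructor
      · rintro ⟨h1, h2⟩; exact ⟨x - 1, by omega, by omega⟩
      · rintro ⟨j, hj, rfl⟩; omega
    rw [hicc, Finset.prod_image (by intro a _ b _ h; simp only at h; omega)]
    refine Finset.prod_congr rfl (fun j hj => ?_)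
    rw [hq_cast (j + 1), max_eq_left (by omega : 1 ≤ j + 1)]
  rw [hprodeq]
  have hcast : ((∏ j ∈ Finset.Icc 1 d, (q j : ℤ)) : ℝ) = ∏ j ∈ Finset.Icc 1 d, (q j : ℝ) := by
    push_cast
    rfl
  have hfin2 : ((latCount K Λ : ℤ) : ℝ) ≤ ((∏ j ∈ Finset.Icc 1 d, (q j : ℤ)) : ℝ) := by
    rw [hcast]
    exact_mod_cast hreal
  exact_mod_cast hfin2
end

section
/- Let K_1 and K_2 be convex bodies in ℝ^d, Λ a lattice, and r a positive integer such that (K_1 − K_2) ∩ rΛ = ∅. Then for every integer t ≥ r there exist lattice vectors u_1, u_2 ∈ Λ such that ((K_1 + u_1) − (K_2 + u_2)) ∩ tΛ = ∅. -/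
open Pointwise Set

theorem stmt19 {d : ℕ} (K₁ K₂ : Set (Fin d → ℝ)) (Λ : Submodule ℤ (Fin d → ℝ))
    [DiscreteTopology Λ] [IsZLattice ℝ Λ]
    (h₁conv : Convex ℝ K₁) (h₁comp : IsCompact K₁) (h₁int : (interior K₁).Nonempty)
    (h₂conv : Convex ℝ K₂) (h₂comp : IsCompact K₂) (h₂int : (interior K₂).Nonempty)
    (r : ℕ) (hr : 0 < r)
    (hdisj : (K₁ - K₂) ∩ ((r : ℝ) • (Λ : Set (Fin d → ℝ))) = ∅)
    (t : ℕ) (ht : r ≤ t) :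
    ∃ u₁ ∈ Λ, ∃ u₂ ∈ Λ,
      ((u₁ +ᵥ K₁) - (u₂ +ᵥ K₂)) ∩ ((t : ℝ) • (Λ : Set (Fin d → ℝ))) = ∅ := by
  classical
  by_contra hcon
  push_neg at hcon
  -- basic numerology
  have hr0 : (0:ℝ) < (r:ℝ) := by exact_mod_cast hr
  have htr : (r:ℝ) ≤ (t:ℝ) := by exact_mod_cast ht
  have ht0 : (0:ℝ) < (t:ℝ) := lt_of_lt_of_le hr0 htr
  set sN : ℕ := t - r with hsN
  have hsr : (sN : ℝ) = (t:ℝ) - (r:ℝ) := by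
    rw [hsN, Nat.cast_sub ht]
  have hs0 : (0:ℝ) ≤ (sN:ℝ) := Nat.cast_nonneg _
  have hst : (sN:ℝ) < (t:ℝ) := by rw [hsr]; linarith
  -- convexity of the difference body
  have hCconv : Convex ℝ (K₁ - K₂) := h₁conv.sub h₂conv
  -- coverage : every coset of tΛ through a lattice point meets K₁ - K₂
  have hcov : ∀ v : Λ, ∃ z : Λ, (t:ℝ) • (z : Fin d → ℝ) - (v : Fin d → ℝ) ∈ K₁ - K₂ := by
    intro v
    obtain ⟨x, hx1, hx2⟩ := hcon (v : Fin d → ℝ) v.2 0 Λ.zero_mem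
    rw [zero_vadd] at hx1
    obtain ⟨a, ha, b, hb, hab⟩ := Set.mem_sub.mp hx1
    obtain ⟨a₀, ha₀, haa⟩ := Set.mem_vadd_set.mp ha
    obtain ⟨w, hw, hwx⟩ := Set.mem_smul_set.mp hx2
    refine ⟨⟨w, hw⟩, ?_⟩
    have hxv : (t:ℝ) • w - (v : Fin d → ℝ) = a₀ - b := by
      have h1 : (v : Fin d → ℝ) + a₀ = a := haa
      have h2 : a - b = x := hab
      rw [hwx, ← h2, ← h1]
      abel
    rw [hxv]
    exact Set.sub_mem_sub ha₀ hb
  choose g hg using hcov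
  -- the iteration
  let u : ℕ → Λ := fun k => Nat.rec (⟨0, Λ.zero_mem⟩ : Λ) (fun _ w => g (sN • w)) k
  have hu0 : (u 0).val = 0 := rfl
  have hus : ∀ k, u (k+1) = g (sN • u k) := fun _ => rfl
  have hcoe : ∀ w : Λ, ((sN • w : Λ) : Fin d → ℝ) = (sN:ℝ) • (w : Fin d → ℝ) := by
    intro w
    rw [Nat.cast_smul_eq_nsmul]
    rfl
  have hc : ∀ k, (t:ℝ) • (u (k+1)).val - (sN:ℝ) • (u k).val ∈ K₁ - K₂ := by
    intro k
    have := hg (sN • u k)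
    rw [hcoe] at this
    rw [hus k]
    exact this
  -- bound
  obtain ⟨M₀, hM₀⟩ := isBounded_iff_forall_norm_le.mp
    (by rw [sub_eq_add_neg]; exact (h₁comp.add h₂comp.neg).isBounded :
      Bornology.IsBounded (K₁ - K₂))
  set M : ℝ := max M₀ 0 with hM
  have hMb : ∀ x ∈ K₁ - K₂, ‖x‖ ≤ M := fun x hx => (hM₀ x hx).trans (le_max_left _ _)
  have hM0 : (0:ℝ) ≤ M := le_max_right _ _
  have hbnd : ∀ k, ‖(u k).val‖ ≤ M / r := by
    intro k
    induction k with
    | zero => rw [hu0, norm_zero]; positivity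
    | succ k ih =>
      have h1 := hMb _ (hc k)
      have h2 : ‖(t:ℝ) • (u (k+1)).val‖ ≤ M + (sN:ℝ) * (M / r) := by
        calc ‖(t:ℝ) • (u (k+1)).val‖
            = ‖((t:ℝ) • (u (k+1)).val - (sN:ℝ) • (u k).val)
                + (sN:ℝ) • (u k).val‖ := by rw [sub_add_cancel]
          _ ≤ ‖(t:ℝ) • (u (k+1)).val - (sN:ℝ) • (u k).val‖
                + ‖(sN:ℝ) • (u k).val‖ := norm_add_le _ _
          _ ≤ M + (sN:ℝ) * (M / r) := by
              refine add_le_add h1 ?_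
              rw [norm_smul, Real.norm_eq_abs, abs_of_nonneg hs0]
              exact mul_le_mul_of_nonneg_left ih hs0
      rw [norm_smul, Real.norm_eq_abs, abs_of_pos ht0] at h2
      have h3 : M + (sN:ℝ) * (M / r) = (t:ℝ) * (M / r) := by
        rw [hsr]; field_simp; ring
      rw [h3] at h2
      exact le_of_mul_le_mul_left h2 ht0
  -- finiteness of lattice points in a ball
  have hclosed : IsClosed (Λ : Set (Fin d → ℝ)) := by
    haveI : DiscreteTopology Λ.toAddSubgroup := (inferInstance : DiscreteTopology Λ)
    have : IsClosed ((Λ.toAddSubgroup : AddSubgroup (Fin d → ℝ)) : Set (Fin d → ℝ)) :=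
      AddSubgroup.isClosed_of_discrete
    exact this
  set S : Set (Fin d → ℝ) := (Λ : Set (Fin d → ℝ)) ∩ Metric.closedBall 0 (M / r) with hSdef
  have hScomp : IsCompact S := (isCompact_closedBall _ _).inter_left hclosed
  have hSdisc : DiscreteTopology S :=
    DiscreteTopology.of_subset (inferInstance : DiscreteTopology (Λ : Set (Fin d → ℝ)))
      Set.inter_subset_left
  have hSfin : S.Finite := hScomp.finite ⟨hSdisc⟩
  haveI := hSfin.to_subtype
  obtain ⟨n, m, hnm, hnmeq⟩ := Finite.exists_ne_map_eq_of_infinite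
    (fun k => (⟨(u k).val, ⟨(u k).2, mem_closedBall_zero_iff.mpr (hbnd k)⟩⟩ : S))
  have huequ : u n = u m := by
    have hvals := Subtype.ext_iff.mp hnmeq
    exact Subtype.ext hvals
  -- the key telescoping argument
  have key : ∀ n m : ℕ, n < m → u n = u m → False := by
    intro n m hlt hequ
    have claim : ∀ j, 1 ≤ j →
        (((t:ℝ) - (sN:ℝ)) / ((t:ℝ)^j - (sN:ℝ)^j)) •
          ((t:ℝ)^j • (u (n+j)).val - (sN:ℝ)^j • (u n).val)
          ∈ K₁ - K₂ := by
      intro j hj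
      induction j, hj using Nat.le_induction with
      | base =>
        have hts : (0:ℝ) < (t:ℝ) - (sN:ℝ) := by linarith
        rw [pow_one, pow_one, div_self (ne_of_gt hts), one_smul]
        exact hc n
      | succ j hj ih =>
        have hDj : (0:ℝ) < (t:ℝ)^j - (sN:ℝ)^j :=
          sub_pos.mpr (pow_lt_pow_left₀ hst hs0 (by omega))
        have hDj1 : (0:ℝ) < (t:ℝ)^(j+1) - (sN:ℝ)^(j+1) :=
          sub_pos.mpr (pow_lt_pow_left₀ hst hs0 (by omega))
        have hDj' : ((t:ℝ)^j - (sN:ℝ)^j) ≠ 0 := ne_of_gt hDj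
        have hDj1' : ((t:ℝ)^(j+1) - (sN:ℝ)^(j+1)) ≠ 0 := ne_of_gt hDj1
        have hts : (0:ℝ) < (t:ℝ) - (sN:ℝ) := by linarith
        set a : ℝ := (sN:ℝ) * ((t:ℝ)^j - (sN:ℝ)^j) / ((t:ℝ)^(j+1) - (sN:ℝ)^(j+1)) with hadef
        set b : ℝ := ((t:ℝ) - (sN:ℝ)) * (t:ℝ)^j / ((t:ℝ)^(j+1) - (sN:ℝ)^(j+1)) with hbdef
        have ha : 0 ≤ a := div_nonneg (mul_nonneg hs0 hDj.le) hDj1.le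
        have hb' : 0 ≤ b := div_nonneg (mul_nonneg hts.le (pow_nonneg ht0.le _)) hDj1.le
        have hab : a + b = 1 := by
          rw [hadef, hbdef]
          field_simp
          ring
        have hmem := hCconv ih (hc (n+j)) ha hb' hab
        have heq2 :
            (((t:ℝ) - (sN:ℝ)) / ((t:ℝ)^(j+1) - (sN:ℝ)^(j+1))) •
              ((t:ℝ)^(j+1) • (u (n+(j+1))).val
                - (sN:ℝ)^(j+1) • (u n).val)
            = a • ((((t:ℝ) - (sN:ℝ)) / ((t:ℝ)^j - (sN:ℝ)^j)) •
                ((t:ℝ)^j • (u (n+j)).val - (sN:ℝ)^j • (u n).val))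
              + b • ((t:ℝ) • (u (n+j+1)).val
                - (sN:ℝ) • (u (n+j)).val) := by
          have hnj : n + (j+1) = n + j + 1 := by omega
          rw [hnj, hadef, hbdef]
          match_scalars
          · field_simp
            ring
          · field_simp
            ring
          · field_simp
            ring
        rw [heq2]
        exact hmem
    -- apply at j = m - n
    have hj1 : 1 ≤ m - n := by omega
    have hfin := claim (m - n) hj1
    have hnm' : n + (m - n) = m := by omega
    rw [hnm', ← hequ] at hfin
    have hD : (0:ℝ) < (t:ℝ)^(m-n) - (sN:ℝ)^(m-n) :=
      sub_pos.mpr (pow_lt_pow_left₀ hst hs0 (by omega))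
    rw [← sub_smul, smul_smul, div_mul_cancel₀ _ (ne_of_gt hD)] at hfin
    have hts_r : (t:ℝ) - (sN:ℝ) = (r:ℝ) := by rw [hsr]; ring
    rw [hts_r] at hfin
    -- hfin : (r:ℝ) • ↑(u n) ∈ K₁ - K₂
    have hmem2 : (r:ℝ) • (u n).val ∈ (r:ℝ) • (Λ : Set (Fin d → ℝ)) :=
      Set.smul_mem_smul_set (u n).2
    have : (r:ℝ) • (u n).val ∈
        (K₁ - K₂) ∩ ((r : ℝ) • (Λ : Set (Fin d → ℝ))) := ⟨hfin, hmem2⟩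
    rw [hdisj] at this
    exact this
  rcases hnm.lt_or_gt with h | h
  · exact key n m h huequ
  · exact key m n h huequ.symm
end
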